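/- arXiv:2105.00743 — 13 statements merged into one kernel-verified Lean document; each statement's English description precedes it below -/
import Mathlib

section
/- Let r be a positive integer and 0 < δ < 1/(100r). Let X₀,…,X_r be an SoS-augmented δ-weak martingale sequence of random variables with values in [0,1] such that X₀ = 1/2 almost surely and X_r ∈ {0,1} almost surely. Then P[ ∃ i ∈ {1,…,r} with |X_i − X_{i−1}| ≥ 1/(4√r) ] ≥ 1/20. -/
open MeasureTheory ENNReal

namespace SosGapAux

variable {Ω : Type*}

/-- Sum of squared increments. -/
noncomputable def S (X : ℕ → Ω → ℝ) (i : ℕ) (ω : Ω) : ℝ :=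
  ∑ j ∈ Finset.Icc 1 i, (X j ω - X (j - 1) ω) ^ 2

/-- Indicator that the sum of squares has not yet reached `1/16`. -/
noncomputable def I (X : ℕ → Ω → ℝ) (i : ℕ) (ω : Ω) : ℝ :=
  if S X (i - 1) ω < 1 / 16 then 1 else 0

/-- Stopped process. -/
noncomputable def M (X : ℕ → Ω → ℝ) (i : ℕ) (ω : Ω) : ℝ :=
  X 0 ω + ∑ j ∈ Finset.Icc 1 i, I X j ω * (X j ω - X (j - 1) ω)

/-- Stopped sum of squares. -/
noncomputable def T (X : ℕ → Ω → ℝ) (i : ℕ) (ω : Ω) : ℝ :=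
  ∑ j ∈ Finset.Icc 1 i, I X j ω * (X j ω - X (j - 1) ω) ^ 2

variable (X : ℕ → Ω → ℝ) (ω : Ω)

lemma S_mono {i k : ℕ} (h : i ≤ k) : S X i ω ≤ S X k ω :=
  Finset.sum_le_sum_of_subset_of_nonneg
    (Finset.Icc_subset_Icc_right h) (fun _ _ _ => sq_nonneg _)

lemma I_nonneg (i : ℕ) : 0 ≤ I X i ω := by unfold I; split <;> norm_num

lemma I_le_one (i : ℕ) : I X i ω ≤ 1 := by unfold I; split <;> norm_num

lemma I_sq (i : ℕ) : I X i ω * I X i ω = I X i ω := by unfold I; split <;> norm_num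

lemma telescope : ∀ k, X 0 ω + ∑ j ∈ Finset.Icc 1 k, (X j ω - X (j - 1) ω) = X k ω := by
  intro k
  induction k with
  | zero => simp
  | succ n ih =>
      rw [Finset.sum_Icc_succ_top (Nat.succ_le_succ (Nat.zero_le n)), ← add_assoc, ih]
      simp

lemma M_eq {k : ℕ} (h : S X k ω < 1 / 16) : M X k ω = X k ω := by
  have hc : ∀ j ∈ Finset.Icc 1 k, I X j ω * (X j ω - X (j - 1) ω) = X j ω - X (j - 1) ω := by
    intro j hj
    have hj' := (Finset.mem_Icc.mp hj).2
    have hS : S X (j - 1) ω < 1 / 16 :=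
      lt_of_le_of_lt (S_mono X ω (le_trans (Nat.sub_le j 1) hj')) h
    rw [I, if_pos hS, one_mul]
  rw [M, Finset.sum_congr rfl hc, telescope]

lemma I_succ_eq_one {k : ℕ} (h : S X k ω < 1 / 16) : I X (k + 1) ω = 1 := by
  rw [I, Nat.add_sub_cancel, if_pos h]

lemma I_succ_eq_zero {k : ℕ} (h : ¬ S X k ω < 1 / 16) : I X (k + 1) ω = 0 := by
  rw [I, Nat.add_sub_cancel, if_neg h]

lemma MI (k : ℕ) : M X k ω * I X (k + 1) ω = X k ω * I X (k + 1) ω := by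
  by_cases h : S X k ω < 1 / 16
  · rw [M_eq X ω h]
  · rw [I_succ_eq_zero X ω h, mul_zero, mul_zero]

lemma M_succ (k : ℕ) :
    M X (k + 1) ω = M X k ω + I X (k + 1) ω * (X (k + 1) ω - X k ω) := by
  rw [M, Finset.sum_Icc_succ_top (Nat.succ_le_succ (Nat.zero_le k)), ← add_assoc, ← M,
    Nat.add_sub_cancel]

lemma T_succ (k : ℕ) :
    T X (k + 1) ω = T X k ω + I X (k + 1) ω * (X (k + 1) ω - X k ω) ^ 2 := by
  rw [T, Finset.sum_Icc_succ_top (Nat.succ_le_succ (Nat.zero_le k)), ← T, Nat.add_sub_cancel]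

lemma Msq : ∀ k, (M X k ω) ^ 2 = (X 0 ω) ^ 2 + T X k ω +
    ∑ i ∈ Finset.Icc 1 k, 2 * (X (i - 1) ω * I X i ω) * (X i ω - X (i - 1) ω) := by
  intro k
  induction k with
  | zero => simp [M, T]
  | succ n ih =>
      rw [M_succ, T_succ, Finset.sum_Icc_succ_top (Nat.succ_le_succ (Nat.zero_le n)),
        Nat.add_sub_cancel]
      have hkey : (M X n ω + I X (n + 1) ω * (X (n + 1) ω - X n ω)) ^ 2
          = (M X n ω) ^ 2 + 2 * (M X n ω * I X (n + 1) ω) * (X (n + 1) ω - X n ω)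
            + (I X (n + 1) ω * I X (n + 1) ω) * (X (n + 1) ω - X n ω) ^ 2 := by ring
      rw [hkey, MI X ω n, I_sq X ω (n + 1), ih]
      ring

lemma T_le_S (k : ℕ) : T X k ω ≤ S X k ω :=
  Finset.sum_le_sum fun j _ => mul_le_of_le_one_left (sq_nonneg _) (I_le_one X ω j)

lemma T_bound {r : ℕ} (hD : ∀ j, 1 ≤ j → j ≤ r → (X j ω - X (j - 1) ω) ^ 2 ≤ 1) :
    ∀ k, k ≤ r → T X k ω ≤ 1 / 16 + 1 := by
  intro k
  induction k with
  | zero => intro _; simp [T]; norm_num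
  | succ n ih =>
      intro hk
      rw [T_succ]
      by_cases h : S X n ω < 1 / 16
      · rw [I_succ_eq_one X ω h, one_mul]
        have h1 : T X n ω ≤ S X n ω := T_le_S X ω n
        have h2 : (X (n + 1) ω - X ((n + 1) - 1) ω) ^ 2 ≤ 1 :=
          hD (n + 1) (Nat.succ_le_succ (Nat.zero_le n)) hk
        rw [Nat.add_sub_cancel] at h2
        linarith
      · rw [I_succ_eq_zero X ω h, zero_mul, add_zero]
        exact ih (le_trans (Nat.le_succ n) hk)

lemma M_mem {r : ℕ} (hX : ∀ i, i ≤ r → X i ω ∈ Set.Icc (0 : ℝ) 1) :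
    ∀ k, k ≤ r → M X k ω ∈ Set.Icc (0 : ℝ) 1 := by
  intro k
  induction k with
  | zero => intro _; simpa [M] using hX 0 (Nat.zero_le r)
  | succ n ih =>
      intro hk
      rw [M_succ]
      by_cases h : S X n ω < 1 / 16
      · rw [M_eq X ω h, I_succ_eq_one X ω h, one_mul]
        have : X n ω + (X (n + 1) ω - X n ω) = X (n + 1) ω := by ring
        rw [this]
        exact hX (n + 1) hk
      · rw [I_succ_eq_zero X ω h, zero_mul, add_zero]
        exact ih (le_trans (Nat.le_succ n) hk)

/-- Key swap: integrating a bounded `m`-measurable function against `f` is the same as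
against `μ[f|m]`. -/
lemma key_swap {Ω : Type*} [m0 : MeasurableSpace Ω] (μ : Measure Ω) [IsProbabilityMeasure μ]
    {m : MeasurableSpace Ω} (hm : m ≤ m0) {g f : Ω → ℝ}
    (hg : StronglyMeasurable[m] g) {c : ℝ} (hgb : ∀ᵐ ω ∂μ, ‖g ω‖ ≤ c)
    (hf : Integrable f μ) :
    ∫ ω, g ω * f ω ∂μ = ∫ ω, g ω * (μ[f|m]) ω ∂μ := by
  have h := condExp_stronglyMeasurable_mul_of_bound hm hg hf c hgb
  calc ∫ ω, g ω * f ω ∂μ = ∫ ω, (g * f) ω ∂μ := rfl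
    _ = ∫ ω, (μ[g * f|m]) ω ∂μ := (integral_condExp hm).symm
    _ = ∫ ω, (g * μ[f|m]) ω ∂μ := integral_congr_ae h
    _ = ∫ ω, g ω * (μ[f|m]) ω ∂μ := rfl

/-- Single-step bound for the weak martingale property. -/
lemma step_bound {Ω : Type*} [m0 : MeasurableSpace Ω] (μ : Measure Ω) [IsProbabilityMeasure μ]
    {m : MeasurableSpace Ω} (hm : m ≤ m0) {Y Z g : Ω → ℝ}
    (hY : Integrable Y μ) (hZm : StronglyMeasurable[m] Z) (hZ : Integrable Z μ)
    (hg : StronglyMeasurable[m] g) (hgb : ∀ᵐ ω ∂μ, ‖g ω‖ ≤ 1)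
    {δ : ℝ} (hd : ∀ᵐ ω ∂μ, |(μ[Y|m]) ω - Z ω| ≤ δ) :
    |∫ ω, g ω * (Y ω - Z ω) ∂μ| ≤ δ := by
  have hgm0 : AEStronglyMeasurable[m0] g μ := (hg.mono hm).aestronglyMeasurable
  have hgY : Integrable (fun ω => g ω * Y ω) μ := hY.bdd_mul hgm0 hgb
  have hgZ : Integrable (fun ω => g ω * Z ω) μ := hZ.bdd_mul hgm0 hgb
  have hgC : Integrable (fun ω => g ω * (μ[Y|m]) ω) μ := integrable_condExp.bdd_mul hgm0 hgb
  have e1 : ∫ ω, g ω * (Y ω - Z ω) ∂μ = ∫ ω, g ω * Y ω ∂μ - ∫ ω, g ω * Z ω ∂μ := by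
    rw [← integral_sub hgY hgZ]
    apply integral_congr_ae
    filter_upwards with ω
    ring
  have e2 : ∫ ω, g ω * Y ω ∂μ = ∫ ω, g ω * (μ[Y|m]) ω ∂μ := key_swap (m0 := m0) μ hm hg hgb hY
  have e3 : ∫ ω, g ω * (μ[Y|m]) ω ∂μ - ∫ ω, g ω * Z ω ∂μ
      = ∫ ω, g ω * ((μ[Y|m]) ω - Z ω) ∂μ := by
    rw [← integral_sub hgC hgZ]
    apply integral_congr_ae
    filter_upwards with ω
    ring
  rw [e1, e2, e3]
  have hb : ∀ᵐ ω ∂μ, ‖g ω * ((μ[Y|m]) ω - Z ω)‖ ≤ δ := by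
    filter_upwards [hgb, hd] with ω h1 h2
    rw [norm_mul]
    calc ‖g ω‖ * ‖(μ[Y|m]) ω - Z ω‖ ≤ 1 * δ :=
          mul_le_mul h1 h2 (norm_nonneg _) zero_le_one
      _ = δ := one_mul δ
  have := norm_integral_le_of_norm_le_const (μ := μ) hb
  simpa [Real.norm_eq_abs] using this

end SosGapAux

open SosGapAux

/-- **SoS-augmented weak martingales have a large gap.**
If `X₀,…,X_r` is an SoS-augmented `δ`-weak martingale with values in `[0,1]`,
`X₀ = 1/2` a.s. and `X_r ∈ {0,1}` a.s., where `0 < δ < 1/(100 r)`, then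
`P[ ∃ i ∈ {1,…,r}, |X_i − X_{i−1}| ≥ 1/(4√r) ] ≥ 1/20`. -/
theorem sos_augmented_weak_martingale_gap
    {Ω : Type*} [MeasurableSpace Ω] (μ : Measure Ω) [IsProbabilityMeasure μ]
    (r : ℕ) (hr : 0 < r) (δ : ℝ) (hδ0 : 0 < δ) (hδ : δ < 1 / (100 * r))
    (X : ℕ → Ω → ℝ) (hXmeas : ∀ i, Measurable (X i))
    (hrange : ∀ i ≤ r, ∀ᵐ ω ∂μ, X i ω ∈ Set.Icc (0 : ℝ) 1)
    (hstart : ∀ᵐ ω ∂μ, X 0 ω = 1 / 2)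
    (hend : ∀ᵐ ω ∂μ, X r ω = 0 ∨ X r ω = 1)
    (hmart : ∀ i, 1 ≤ i → i ≤ r → ∀ᵐ ω ∂μ,
      |(μ[X i | MeasurableSpace.comap
          (fun ω => (X (i - 1) ω,
            ∑ j ∈ Finset.Icc 1 (i - 1), (X j ω - X (j - 1) ω) ^ 2))
          inferInstance]) ω - X (i - 1) ω| ≤ δ) :
    (1 / 20 : ℝ≥0∞) ≤
      μ {ω | ∃ i, 1 ≤ i ∧ i ≤ r ∧
        1 / (4 * Real.sqrt r) ≤ |X i ω - X (i - 1) ω|} := by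
  classical
  -- basic measurability
  have hSmeas : ∀ k, Measurable (fun ω => S X k ω) := fun k =>
    Finset.measurable_sum _ fun j _ => ((hXmeas j).sub (hXmeas (j - 1))).pow_const 2
  have hImeas : ∀ i, Measurable (I X i) := fun i =>
    Measurable.ite (measurableSet_lt (hSmeas (i - 1)) measurable_const)
      measurable_const measurable_const
  -- the conditioning σ-algebras
  set mG : ℕ → MeasurableSpace Ω := fun i =>
    MeasurableSpace.comap (fun ω => (X (i - 1) ω, S X (i - 1) ω)) inferInstance with hmG
  have hm : ∀ i, mG i ≤ ‹MeasurableSpace Ω› := fun i =>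
    measurable_iff_comap_le.mp ((hXmeas (i - 1)).prodMk (hSmeas (i - 1)))
  have hφ : ∀ i, Measurable[mG i] (fun ω => (X (i - 1) ω, S X (i - 1) ω)) := fun i =>
    measurable_iff_comap_le.mpr le_rfl
  have hXmG : ∀ i, Measurable[mG i] (X (i - 1)) := fun i => (measurable_fst.comp (hφ i))
  have hSmG : ∀ i, Measurable[mG i] (fun ω => S X (i - 1) ω) := fun i =>
    (measurable_snd.comp (hφ i))
  have hImG : ∀ i, Measurable[mG i] (I X i) := fun i =>
    Measurable.ite (measurableSet_lt (hSmG i) measurable_const)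
      measurable_const measurable_const
  -- integrability of the X's
  have hXint : ∀ i, i ≤ r → Integrable (X i) μ := by
    intro i hi
    refine (integrable_const (1 : ℝ)).mono' (hXmeas i).aestronglyMeasurable ?_
    filter_upwards [hrange i hi] with ω hω
    rw [Real.norm_eq_abs, abs_le]
    exact ⟨by linarith [hω.1], by linarith [hω.2]⟩
  -- the step bound
  have hstep : ∀ i, 1 ≤ i → i ≤ r → ∀ g : Ω → ℝ, StronglyMeasurable[mG i] g →
      (∀ᵐ ω ∂μ, ‖g ω‖ ≤ 1) → |∫ ω, g ω * (X i ω - X (i - 1) ω) ∂μ| ≤ δ := by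
    intro i h1 h2 g hg hgb
    exact step_bound μ (hm i) (hXint i h2) (hXmG i).stronglyMeasurable
      (hXint (i - 1) (le_trans (Nat.sub_le i 1) h2)) hg hgb (hmart i h1 h2)
  have hID : ∀ i ∈ Finset.Icc 1 r, |∫ ω, I X i ω * (X i ω - X (i - 1) ω) ∂μ| ≤ δ := by
    intro i hi
    obtain ⟨h1, h2⟩ := Finset.mem_Icc.mp hi
    refine hstep i h1 h2 _ (hImG i).stronglyMeasurable (ae_of_all _ fun ω => ?_)
    rw [Real.norm_eq_abs, abs_of_nonneg (I_nonneg X ω i)]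
    exact I_le_one X ω i
  have hXID : ∀ i ∈ Finset.Icc 1 r,
      |∫ ω, (X (i - 1) ω * I X i ω) * (X i ω - X (i - 1) ω) ∂μ| ≤ δ := by
    intro i hi
    obtain ⟨h1, h2⟩ := Finset.mem_Icc.mp hi
    refine hstep i h1 h2 _ ((hXmG i).mul (hImG i)).stronglyMeasurable ?_
    filter_upwards [hrange (i - 1) (le_trans (Nat.sub_le i 1) h2)] with ω hω
    rw [Real.norm_eq_abs, abs_mul]
    calc |X (i - 1) ω| * |I X i ω| ≤ 1 * 1 := by
          refine mul_le_mul ?_ ?_ (abs_nonneg _) zero_le_one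
          · rw [abs_le]; exact ⟨by linarith [hω.1], by linarith [hω.2]⟩
          · rw [abs_of_nonneg (I_nonneg X ω i)]; exact I_le_one X ω i
      _ = 1 := one_mul 1
  -- more integrability
  have hDint : ∀ i, 1 ≤ i → i ≤ r → Integrable (fun ω => X i ω - X (i - 1) ω) μ := fun i h1 h2 =>
    (hXint i h2).sub (hXint (i - 1) (le_trans (Nat.sub_le i 1) h2))
  have hIDint : ∀ i ∈ Finset.Icc 1 r,
      Integrable (fun ω => I X i ω * (X i ω - X (i - 1) ω)) μ := by
    intro i hi
    obtain ⟨h1, h2⟩ := Finset.mem_Icc.mp hi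
    refine (hDint i h1 h2).bdd_mul (c := 1) (hImeas i).aestronglyMeasurable
      (ae_of_all _ fun ω => ?_)
    rw [Real.norm_eq_abs, abs_of_nonneg (I_nonneg X ω i)]
    exact I_le_one X ω i
  have hD2int : ∀ i, 1 ≤ i → i ≤ r →
      Integrable (fun ω => (X i ω - X (i - 1) ω) ^ 2) μ := by
    intro i h1 h2
    refine (integrable_const (1 : ℝ)).mono'
      (((hXmeas i).sub (hXmeas (i - 1))).pow_const 2).aestronglyMeasurable ?_
    filter_upwards [hrange i h2, hrange (i - 1) (le_trans (Nat.sub_le i 1) h2)] with ω hω hω'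
    rw [Real.norm_eq_abs, abs_le]
    constructor
    · nlinarith [sq_nonneg (X i ω - X (i - 1) ω)]
    · nlinarith [hω.1, hω.2, hω'.1, hω'.2]
  have hID2int : ∀ i ∈ Finset.Icc 1 r,
      Integrable (fun ω => I X i ω * (X i ω - X (i - 1) ω) ^ 2) μ := by
    intro i hi
    obtain ⟨h1, h2⟩ := Finset.mem_Icc.mp hi
    refine (hD2int i h1 h2).bdd_mul (c := 1) (hImeas i).aestronglyMeasurable
      (ae_of_all _ fun ω => ?_)
    rw [Real.norm_eq_abs, abs_of_nonneg (I_nonneg X ω i)]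
    exact I_le_one X ω i
  have hXIDint : ∀ i ∈ Finset.Icc 1 r,
      Integrable (fun ω => (X (i - 1) ω * I X i ω) * (X i ω - X (i - 1) ω)) μ := by
    intro i hi
    obtain ⟨h1, h2⟩ := Finset.mem_Icc.mp hi
    refine (hDint i h1 h2).bdd_mul (c := 1)
      ((hXmeas (i - 1)).mul (hImeas i)).aestronglyMeasurable ?_
    filter_upwards [hrange (i - 1) (le_trans (Nat.sub_le i 1) h2)] with ω hω
    rw [Real.norm_eq_abs, abs_mul]
    calc |X (i - 1) ω| * |I X i ω| ≤ 1 * 1 := by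
          refine mul_le_mul ?_ ?_ (abs_nonneg _) zero_le_one
          · rw [abs_le]; exact ⟨by linarith [hω.1], by linarith [hω.2]⟩
          · rw [abs_of_nonneg (I_nonneg X ω i)]; exact I_le_one X ω i
      _ = 1 := one_mul 1
  have hTint : Integrable (fun ω => T X r ω) μ := by
    unfold T
    exact integrable_finset_sum _ hID2int
  have hMint : Integrable (fun ω => M X r ω) μ := by
    unfold M
    exact (hXint 0 (Nat.zero_le r)).add (integrable_finset_sum _ hIDint)
  have hMmeas : Measurable (fun ω => M X r ω) := by
    unfold M
    exact (hXmeas 0).add (Finset.measurable_sum _ fun j _ =>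
      (hImeas j).mul ((hXmeas j).sub (hXmeas (j - 1))))
  -- a.e. range facts
  have haeX : ∀ᵐ ω ∂μ, ∀ i, i ≤ r → X i ω ∈ Set.Icc (0 : ℝ) 1 := by
    rw [ae_all_iff]
    intro i
    by_cases hi : i ≤ r
    · filter_upwards [hrange i hi] with ω hω _
      exact hω
    · exact ae_of_all _ fun ω h => absurd h hi
  have haeM : ∀ᵐ ω ∂μ, M X r ω ∈ Set.Icc (0 : ℝ) 1 := by
    filter_upwards [haeX] with ω hω
    exact M_mem X ω hω r le_rfl
  have hM2int : Integrable (fun ω => (M X r ω) ^ 2) μ := by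
    refine (integrable_const (1 : ℝ)).mono' (hMmeas.pow_const 2).aestronglyMeasurable ?_
    filter_upwards [haeM] with ω hω
    rw [Real.norm_eq_abs, abs_le]
    constructor
    · nlinarith [sq_nonneg (M X r ω)]
    · nlinarith [hω.1, hω.2]
  -- the bad set
  set A : Set Ω := {ω | (1 : ℝ) / 16 ≤ S X r ω} with hA
  have hAmeas : MeasurableSet A := measurableSet_le measurable_const (hSmeas r)
  set J : Ω → ℝ := fun ω => if (1 : ℝ) / 16 ≤ S X r ω then 1 else 0 with hJ
  have hJmeas : Measurable J :=
    Measurable.ite (measurableSet_le measurable_const (hSmeas r))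
      measurable_const measurable_const
  have hJint : Integrable J μ := by
    refine (integrable_const (1 : ℝ)).mono' hJmeas.aestronglyMeasurable
      (ae_of_all _ fun ω => ?_)
    simp only [hJ, Real.norm_eq_abs]
    split <;> norm_num
  have hJeq : ∫ ω, J ω ∂μ = (μ A).toReal := by
    have : J = A.indicator (fun _ => (1 : ℝ)) := by
      funext ω
      rw [hJ, Set.indicator_apply]
      rfl
    rw [this, integral_indicator_const (1 : ℝ) hAmeas, smul_eq_mul, mul_one, measureReal_def]
  set p : ℝ := ∫ ω, J ω ∂μ with hp
  -- E[M r] ≥ 1/2 - r δ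
  have hEMeq : ∫ ω, M X r ω ∂μ
      = ∫ ω, X 0 ω ∂μ + ∑ i ∈ Finset.Icc 1 r, ∫ ω, I X i ω * (X i ω - X (i - 1) ω) ∂μ := by
    unfold M
    rw [integral_add (hXint 0 (Nat.zero_le r)) (integrable_finset_sum _ hIDint),
      integral_finset_sum _ hIDint]
  have hEX0 : ∫ ω, X 0 ω ∂μ = 1 / 2 := by
    rw [integral_congr_ae (g := fun _ => (1 : ℝ) / 2) hstart]
    simp
  have hcard : (Finset.Icc 1 r).card = r := by
    rw [Nat.card_Icc]; omega
  have hEM : 1 / 2 - (r : ℝ) * δ ≤ ∫ ω, M X r ω ∂μ := by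
    rw [hEMeq, hEX0]
    have hsum : -((r : ℝ) * δ) ≤ ∑ i ∈ Finset.Icc 1 r,
        ∫ ω, I X i ω * (X i ω - X (i - 1) ω) ∂μ := by
      have h1 : ∀ i ∈ Finset.Icc 1 r, -δ ≤ ∫ ω, I X i ω * (X i ω - X (i - 1) ω) ∂μ :=
        fun i hi => (abs_le.mp (hID i hi)).1
      calc -((r : ℝ) * δ) = ∑ _i ∈ Finset.Icc 1 r, (-δ) := by
            rw [Finset.sum_const, hcard, nsmul_eq_mul]; ring
        _ ≤ _ := Finset.sum_le_sum h1
    linarith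
  -- E[(M r)^2] = 1/4 + E[T r] + error
  have hEM2eq : ∫ ω, (M X r ω) ^ 2 ∂μ
      = ∫ ω, (X 0 ω) ^ 2 ∂μ + ∫ ω, T X r ω ∂μ
        + ∑ i ∈ Finset.Icc 1 r,
            2 * ∫ ω, (X (i - 1) ω * I X i ω) * (X i ω - X (i - 1) ω) ∂μ := by
    have hptw : (fun ω => (M X r ω) ^ 2) = fun ω => (X 0 ω) ^ 2 + T X r ω +
        ∑ i ∈ Finset.Icc 1 r, 2 * (X (i - 1) ω * I X i ω) * (X i ω - X (i - 1) ω) := by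
      funext ω
      exact Msq X ω r
    have hX02int : Integrable (fun ω => (X 0 ω) ^ 2) μ := by
      refine (integrable_const (1 : ℝ)).mono' ((hXmeas 0).pow_const 2).aestronglyMeasurable ?_
      filter_upwards [hrange 0 (Nat.zero_le r)] with ω hω
      rw [Real.norm_eq_abs, abs_le]
      constructor
      · nlinarith [sq_nonneg (X 0 ω)]
      · nlinarith [hω.1, hω.2]
    have hsummandint : ∀ i ∈ Finset.Icc 1 r,
        Integrable (fun ω => 2 * (X (i - 1) ω * I X i ω) * (X i ω - X (i - 1) ω)) μ := by
      intro i hi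
      have := (hXIDint i hi).const_mul 2
      refine this.congr ?_
      filter_upwards with ω
      ring
    have h12 : Integrable (fun ω => (X 0 ω) ^ 2 + T X r ω) μ := hX02int.add hTint
    rw [hptw, integral_add h12 (integrable_finset_sum _ hsummandint),
      integral_add hX02int hTint, integral_finset_sum _ hsummandint]
    congr 1
    refine Finset.sum_congr rfl fun i hi => ?_
    rw [← integral_const_mul]
    apply integral_congr_ae
    filter_upwards with ω
    ring
  have hEX02 : ∫ ω, (X 0 ω) ^ 2 ∂μ = 1 / 4 := by
    have : (fun ω => (X 0 ω) ^ 2) =ᵐ[μ] fun _ => (1 : ℝ) / 4 := by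
      filter_upwards [hstart] with ω hω
      rw [hω]
      norm_num
    rw [integral_congr_ae this]
    simp
  have herr : |∑ i ∈ Finset.Icc 1 r,
      2 * ∫ ω, (X (i - 1) ω * I X i ω) * (X i ω - X (i - 1) ω) ∂μ| ≤ 2 * r * δ := by
    calc |∑ i ∈ Finset.Icc 1 r,
        2 * ∫ ω, (X (i - 1) ω * I X i ω) * (X i ω - X (i - 1) ω) ∂μ|
        ≤ ∑ i ∈ Finset.Icc 1 r,
            |2 * ∫ ω, (X (i - 1) ω * I X i ω) * (X i ω - X (i - 1) ω) ∂μ| :=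
          Finset.abs_sum_le_sum_abs _ _
      _ ≤ ∑ _i ∈ Finset.Icc 1 r, 2 * δ := by
          refine Finset.sum_le_sum fun i hi => ?_
          rw [abs_mul, abs_two]
          have := hXID i hi
          linarith
      _ = 2 * r * δ := by rw [Finset.sum_const, hcard, nsmul_eq_mul]; ring
  -- a.e. T r ≤ 1/16 + J
  have hTJ : ∫ ω, T X r ω ∂μ ≤ 1 / 16 + p := by
    have hae : ∀ᵐ ω ∂μ, T X r ω ≤ 1 / 16 + J ω := by
      filter_upwards [haeX] with ω hω
      by_cases hS : (1 : ℝ) / 16 ≤ S X r ω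
      · have hJ1 : J ω = 1 := if_pos hS
        rw [hJ1]
        refine T_bound X ω (fun j h1 h2 => ?_) r le_rfl
        have ha := hω j h2
        have hb := hω (j - 1) (le_trans (Nat.sub_le j 1) h2)
        nlinarith [ha.1, ha.2, hb.1, hb.2]
      · have hJ0 : J ω = 0 := if_neg hS
        rw [hJ0, add_zero]
        push_neg at hS
        exact le_of_lt (lt_of_le_of_lt (T_le_S X ω r) hS)
    calc ∫ ω, T X r ω ∂μ ≤ ∫ ω, (1 / 16 + J ω) ∂μ :=
          integral_mono_ae hTint ((integrable_const _).add hJint) hae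
      _ = 1 / 16 + p := by
          rw [integral_add (integrable_const _) hJint]
          simp [hp]
  -- a.e. M r - J ≤ (M r)^2
  have hMJ : ∫ ω, M X r ω ∂μ - p ≤ ∫ ω, (M X r ω) ^ 2 ∂μ := by
    have hae : ∀ᵐ ω ∂μ, M X r ω - J ω ≤ (M X r ω) ^ 2 := by
      filter_upwards [haeX, hend] with ω hω hend'
      by_cases hS : (1 : ℝ) / 16 ≤ S X r ω
      · have hJ1 : J ω = 1 := if_pos hS
        have hM := M_mem X ω hω r le_rfl
        rw [hJ1]
        nlinarith [hM.1, hM.2, sq_nonneg (M X r ω)]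
      · have hJ0 : J ω = 0 := if_neg hS
        push_neg at hS
        have hMeq : M X r ω = X r ω := M_eq X ω hS
        rw [hJ0, hMeq, sub_zero]
        rcases hend' with h | h <;> rw [h] <;> norm_num
    have hsubint : Integrable (fun ω => M X r ω - J ω) μ := hMint.sub hJint
    have := integral_mono_ae hsubint hM2int hae
    rw [integral_sub hMint hJint] at this
    exact this
  -- combine
  have hrδ : (r : ℝ) * δ < 1 / 100 := by
    have hr' : (0 : ℝ) < r := by exact_mod_cast hr
    have h100 : (0 : ℝ) < 100 * r := by positivity
    rw [lt_div_iff₀ h100] at hδ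
    nlinarith
  have hfinal : 1 / 20 ≤ p := by
    have h1 := hEM
    have h2 := hMJ
    have h3 : ∫ ω, (M X r ω) ^ 2 ∂μ ≤ 1 / 4 + ∫ ω, T X r ω ∂μ + 2 * r * δ := by
      rw [hEM2eq, hEX02]
      have := (abs_le.mp herr).2
      linarith
    linarith
  -- conclude
  have hsub : A ⊆ {ω | ∃ i, 1 ≤ i ∧ i ≤ r ∧
      1 / (4 * Real.sqrt r) ≤ |X i ω - X (i - 1) ω|} := by
    intro ω hω
    simp only [Set.mem_setOf_eq]
    by_contra hcon
    push_neg at hcon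
    have hrpos : (0 : ℝ) < r := by exact_mod_cast hr
    have hsq : Real.sqrt r > 0 := Real.sqrt_pos.mpr hrpos
    have hlt : ∀ j ∈ Finset.Icc 1 r, (X j ω - X (j - 1) ω) ^ 2 < 1 / (16 * r) := by
      intro j hj
      obtain ⟨h1, h2⟩ := Finset.mem_Icc.mp hj
      have habs := hcon j h1 h2
      have h0 : (0 : ℝ) ≤ |X j ω - X (j - 1) ω| := abs_nonneg _
      have : (X j ω - X (j - 1) ω) ^ 2 < (1 / (4 * Real.sqrt r)) ^ 2 := by
        rw [← sq_abs]
        exact pow_lt_pow_left₀ habs h0 two_ne_zero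
      calc (X j ω - X (j - 1) ω) ^ 2 < (1 / (4 * Real.sqrt r)) ^ 2 := this
        _ = 1 / (16 * r) := by
            rw [div_pow, mul_pow, Real.sq_sqrt (le_of_lt hrpos)]
            norm_num
    have hne : (Finset.Icc 1 r).Nonempty := ⟨1, Finset.mem_Icc.mpr ⟨le_rfl, hr⟩⟩
    have hsum : S X r ω < ∑ _j ∈ Finset.Icc 1 r, 1 / (16 * (r : ℝ)) :=
      Finset.sum_lt_sum_of_nonempty hne hlt
    rw [Finset.sum_const, hcard, nsmul_eq_mul] at hsum
    have : (r : ℝ) * (1 / (16 * r)) = 1 / 16 := by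
      field_simp
    rw [this] at hsum
    exact absurd hω (not_le.mpr hsum)
  have h20 : (1 / 20 : ℝ) ≤ (μ A).toReal := by
    rw [hJeq] at hp
    linarith [hfinal]
  calc (1 / 20 : ℝ≥0∞) = ENNReal.ofReal (1 / 20) := by
        rw [ENNReal.ofReal_div_of_pos (by norm_num)]
        norm_num
    _ ≤ μ A := ENNReal.ofReal_le_of_le_toReal h20
    _ ≤ μ {ω | ∃ i, 1 ≤ i ∧ i ≤ r ∧
          1 / (4 * Real.sqrt r) ≤ |X i ω - X (i - 1) ω|} := measure_mono hsub
end

section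
/- Let r be a positive integer and δ ≥ 0. Let X₀,…,X_r be a δ-weak martingale sequence of random variables with values in [0,1], and set Y_i = X_i − X_{i−1} for i ∈ {1,…,r}. Then | 𝔼[X_r² − X₀²] − 𝔼[ Σ_{i=1}^{r} Y_i² ] | ≤ 2rδ. -/
open MeasureTheory ENNReal

lemma integrable_of_ae_bdd {Ω : Type*} [MeasurableSpace Ω] {μ : Measure Ω} [IsFiniteMeasure μ]
    {f : Ω → ℝ} (C : ℝ) (hf : AEStronglyMeasurable f μ) (h : ∀ᵐ ω ∂μ, |f ω| ≤ C) :
    Integrable f μ :=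
  (integrable_const C).mono' hf (by filter_upwards [h] with ω hω using by rwa [Real.norm_eq_abs])

/-- Per-step bound: the expectation of `g ^ 2 - f ^ 2 - (g - f)^2`
has absolute value at most `2δ`. -/
lemma weak_mart_step {Ω : Type*} [MeasurableSpace Ω] (μ : Measure Ω) [IsProbabilityMeasure μ]
    (δ : ℝ) (hδ0 : 0 ≤ δ) (f g : Ω → ℝ) (hfm : Measurable f) (hgm : Measurable g)
    (hfb : ∀ᵐ ω ∂μ, |f ω| ≤ 1) (hgb : ∀ᵐ ω ∂μ, |g ω| ≤ 1)
    (hmart : ∀ᵐ ω ∂μ,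
      |(μ[g | MeasurableSpace.comap f inferInstance]) ω - f ω| ≤ δ) :
    |∫ ω, ((g ω) ^ 2 - (f ω) ^ 2 - (g ω - f ω) ^ 2) ∂μ| ≤ 2 * δ := by
  have hmle : MeasurableSpace.comap f inferInstance ≤ ‹MeasurableSpace Ω› := hfm.comap_le
  have hfm' : StronglyMeasurable[MeasurableSpace.comap f inferInstance] f :=
    (Measurable.of_comap_le le_rfl).stronglyMeasurable
  have hg_int : Integrable g μ := integrable_of_ae_bdd 1 hgm.aestronglyMeasurable hgb
  have hfg_int : Integrable (f * g) μ := by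
    refine integrable_of_ae_bdd 1 (hfm.mul hgm).aestronglyMeasurable ?_
    filter_upwards [hfb, hgb] with ω h1 h2
    calc |(f * g) ω| = |f ω| * |g ω| := abs_mul _ _
    _ ≤ 1 * 1 := mul_le_mul h1 h2 (abs_nonneg _) zero_le_one
    _ = 1 := mul_one 1
  -- pull-out property
  have hpull : μ[f * g | MeasurableSpace.comap f inferInstance]
      =ᵐ[μ] f * μ[g | MeasurableSpace.comap f inferInstance] :=
    condExp_mul_of_stronglyMeasurable_left hfm' hfg_int hg_int
  have h1 : ∫ ω, f ω * g ω ∂μ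
      = ∫ ω, f ω * (μ[g | MeasurableSpace.comap f inferInstance]) ω ∂μ := by
    calc ∫ ω, f ω * g ω ∂μ
        = ∫ ω, (μ[f * g | MeasurableSpace.comap f inferInstance]) ω ∂μ :=
          (integral_condExp hmle).symm
    _ = ∫ ω, (f * μ[g | MeasurableSpace.comap f inferInstance]) ω ∂μ :=
          integral_congr_ae hpull
    _ = ∫ ω, f ω * (μ[g | MeasurableSpace.comap f inferInstance]) ω ∂μ := rfl
  have hff_int : Integrable (fun ω => f ω * f ω) μ := by
    refine integrable_of_ae_bdd 1 (hfm.mul hfm).aestronglyMeasurable ?_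
    filter_upwards [hfb] with ω h1
    calc |f ω * f ω| = |f ω| * |f ω| := abs_mul _ _
    _ ≤ 1 * 1 := mul_le_mul h1 h1 (abs_nonneg _) zero_le_one
    _ = 1 := mul_one 1
  have hh_int : Integrable
      (fun ω => f ω * ((μ[g | MeasurableSpace.comap f inferInstance]) ω - f ω)) μ := by
    refine integrable_of_ae_bdd δ ?_ ?_
    · exact (hfm.aestronglyMeasurable.mul
        ((stronglyMeasurable_condExp.mono hmle).aestronglyMeasurable.sub
          hfm.aestronglyMeasurable))
    · filter_upwards [hfb, hmart] with ω h1 h2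
      calc |f ω * ((μ[g | MeasurableSpace.comap f inferInstance]) ω - f ω)|
          = |f ω| * |(μ[g | MeasurableSpace.comap f inferInstance]) ω - f ω| := abs_mul _ _
      _ ≤ 1 * δ := mul_le_mul h1 h2 (abs_nonneg _) zero_le_one
      _ = δ := one_mul δ
  have hfg_int' : Integrable (fun ω => f ω * g ω) μ := hfg_int
  have hcalc : ∫ ω, ((g ω) ^ 2 - (f ω) ^ 2 - (g ω - f ω) ^ 2) ∂μ
      = 2 * ∫ ω, f ω * ((μ[g | MeasurableSpace.comap f inferInstance]) ω - f ω) ∂μ := by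
    have hrw : (fun ω => (g ω) ^ 2 - (f ω) ^ 2 - (g ω - f ω) ^ 2)
        = fun ω => 2 * (f ω * g ω) - 2 * (f ω * f ω) := by funext ω; ring
    rw [hrw]
    rw [integral_sub (hfg_int'.const_mul 2) (hff_int.const_mul 2),
      integral_const_mul, integral_const_mul, h1]
    have hA : Integrable
        (fun ω => f ω * (μ[g | MeasurableSpace.comap f inferInstance]) ω) μ := by
      have : (fun ω => f ω * (μ[g | MeasurableSpace.comap f inferInstance]) ω)
          = fun ω => f ω * ((μ[g | MeasurableSpace.comap f inferInstance]) ω - f ω)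
            + f ω * f ω := by funext ω; ring
      rw [this]; exact hh_int.add hff_int
    have hB : (fun ω => f ω * ((μ[g | MeasurableSpace.comap f inferInstance]) ω - f ω))
        = fun ω => f ω * (μ[g | MeasurableSpace.comap f inferInstance]) ω - f ω * f ω := by
      funext ω; ring
    rw [hB, integral_sub hA hff_int]
    ring
  rw [hcalc, abs_mul, abs_two]
  have hkey : |∫ ω, f ω * ((μ[g | MeasurableSpace.comap f inferInstance]) ω - f ω) ∂μ|
      ≤ δ := by
    have h2 := norm_integral_le_integral_norm
      (fun ω => f ω * ((μ[g | MeasurableSpace.comap f inferInstance]) ω - f ω)) (μ := μ)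
    rw [Real.norm_eq_abs] at h2
    refine h2.trans ?_
    calc ∫ ω, ‖f ω * ((μ[g | MeasurableSpace.comap f inferInstance]) ω - f ω)‖ ∂μ
        ≤ ∫ _ω, δ ∂μ := by
          refine integral_mono_ae hh_int.norm (integrable_const δ) ?_
          filter_upwards [hfb, hmart] with ω h1 h2
          rw [Real.norm_eq_abs]
          calc |f ω * ((μ[g | MeasurableSpace.comap f inferInstance]) ω - f ω)|
              = |f ω| * |(μ[g | MeasurableSpace.comap f inferInstance]) ω - f ω| := abs_mul _ _
          _ ≤ 1 * δ := mul_le_mul h1 h2 (abs_nonneg _) zero_le_one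
          _ = δ := one_mul δ
    _ = δ := by simp
  linarith

/-- **Sum of squares of a `δ`-weak martingale** (extension of Dasgupta's identity):
if `X₀,…,X_r` is a `δ`-weak martingale with values in `[0,1]` and `Y_i = X_i − X_{i−1}`,
then `| 𝔼[X_r² − X₀²] − 𝔼[Σ_{i=1}^r Y_i²] | ≤ 2 r δ`. -/
theorem weak_martingale_sum_of_squares_expectation
    {Ω : Type*} [MeasurableSpace Ω] (μ : Measure Ω) [IsProbabilityMeasure μ]
    (r : ℕ) (hr : 0 < r) (δ : ℝ) (hδ0 : 0 ≤ δ)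
    (X : ℕ → Ω → ℝ) (hXmeas : ∀ i, Measurable (X i))
    (hrange : ∀ i ≤ r, ∀ᵐ ω ∂μ, X i ω ∈ Set.Icc (0 : ℝ) 1)
    (hmart : ∀ i, 1 ≤ i → i ≤ r → ∀ᵐ ω ∂μ,
      |(μ[X i | MeasurableSpace.comap (X (i - 1)) inferInstance]) ω
        - X (i - 1) ω| ≤ δ) :
    |(∫ ω, ((X r ω) ^ 2 - (X 0 ω) ^ 2) ∂μ)
      - ∫ ω, ∑ i ∈ Finset.Icc 1 r, (X i ω - X (i - 1) ω) ^ 2 ∂μ|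
      ≤ 2 * r * δ := by
  have habs : ∀ i ≤ r, ∀ᵐ ω ∂μ, |X i ω| ≤ 1 := by
    intro i hi
    filter_upwards [hrange i hi] with ω hω
    rw [abs_le]; exact ⟨by linarith [hω.1], hω.2⟩
  have hsqint : ∀ i ≤ r, Integrable (fun ω => (X i ω) ^ 2) μ := by
    intro i hi
    refine integrable_of_ae_bdd 1 ((hXmeas i).pow_const 2).aestronglyMeasurable ?_
    filter_upwards [habs i hi] with ω hω
    rw [abs_pow]
    calc |X i ω| ^ 2 ≤ 1 ^ 2 := pow_le_pow_left₀ (abs_nonneg _) hω 2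
    _ = 1 := one_pow 2
  have hYint : ∀ i, 1 ≤ i → i ≤ r → Integrable (fun ω => (X i ω - X (i-1) ω) ^ 2) μ := by
    intro i h1 h2
    refine integrable_of_ae_bdd 4
      (((hXmeas i).sub (hXmeas (i-1))).pow_const 2).aestronglyMeasurable ?_
    filter_upwards [habs i h2, habs (i-1) (le_trans (Nat.sub_le i 1) h2)] with ω ha hb
    rw [abs_pow]
    calc |X i ω - X (i-1) ω| ^ 2 ≤ 2 ^ 2 := by
          refine pow_le_pow_left₀ (abs_nonneg _) ?_ 2
          calc |X i ω - X (i-1) ω| ≤ |X i ω| + |X (i-1) ω| := abs_sub _ _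
          _ ≤ 1 + 1 := add_le_add ha hb
          _ = 2 := by norm_num
    _ = 4 := by norm_num
  set T : ℕ → ℝ := fun i => ∫ ω, (X i ω) ^ 2 ∂μ with hT
  set D : ℕ → ℝ := fun i =>
    ∫ ω, ((X i ω) ^ 2 - (X (i-1) ω) ^ 2 - (X i ω - X (i-1) ω) ^ 2) ∂μ with hD
  have hDle : ∀ i ∈ Finset.Icc 1 r, |D i| ≤ 2 * δ := by
    intro i hi
    rw [Finset.mem_Icc] at hi
    exact weak_mart_step μ δ hδ0 (X (i-1)) (X i) (hXmeas (i-1)) (hXmeas i)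
      (habs (i-1) (le_trans (Nat.sub_le i 1) hi.2)) (habs i hi.2)
      (hmart i hi.1 hi.2)
  have hDeq : ∀ i, 1 ≤ i → i ≤ r →
      D i = (T i - T (i-1)) - ∫ ω, (X i ω - X (i-1) ω) ^ 2 ∂μ := by
    intro i h1 h2
    have hA : Integrable (fun ω => (X i ω) ^ 2 - (X (i-1) ω) ^ 2) μ :=
      (hsqint i h2).sub (hsqint (i-1) (le_trans (Nat.sub_le i 1) h2))
    rw [hD]
    rw [show (fun i => ∫ ω, ((X i ω) ^ 2 - (X (i-1) ω) ^ 2 - (X i ω - X (i-1) ω) ^ 2) ∂μ) i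
      = ∫ ω, (((X i ω) ^ 2 - (X (i-1) ω) ^ 2) - (X i ω - X (i-1) ω) ^ 2) ∂μ from rfl,
      integral_sub hA (hYint i h1 h2),
      integral_sub (hsqint i h2) (hsqint (i-1) (le_trans (Nat.sub_le i 1) h2))]
  have htel : ∀ n, ∑ i ∈ Finset.Icc 1 n, (T i - T (i-1)) = T n - T 0 := by
    intro n
    induction n with
    | zero => simp
    | succ k ih =>
      rw [Finset.sum_Icc_succ_top (Nat.one_le_iff_ne_zero.mpr (Nat.succ_ne_zero k)), ih]
      simp
  have hswap : ∫ ω, ∑ i ∈ Finset.Icc 1 r, (X i ω - X (i-1) ω) ^ 2 ∂μ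
      = ∑ i ∈ Finset.Icc 1 r, ∫ ω, (X i ω - X (i-1) ω) ^ 2 ∂μ := by
    refine integral_finset_sum _ ?_
    intro i hi
    rw [Finset.mem_Icc] at hi
    exact hYint i hi.1 hi.2
  have hXr2 : ∫ ω, ((X r ω) ^ 2 - (X 0 ω) ^ 2) ∂μ = T r - T 0 :=
    integral_sub (hsqint r le_rfl) (hsqint 0 (Nat.zero_le r))
  have hmain : (∫ ω, ((X r ω) ^ 2 - (X 0 ω) ^ 2) ∂μ)
      - ∫ ω, ∑ i ∈ Finset.Icc 1 r, (X i ω - X (i-1) ω) ^ 2 ∂μ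
      = ∑ i ∈ Finset.Icc 1 r, D i := by
    rw [hXr2, hswap, ← htel r, ← Finset.sum_sub_distrib]
    refine Finset.sum_congr rfl ?_
    intro i hi
    rw [Finset.mem_Icc] at hi
    rw [hDeq i hi.1 hi.2]
  rw [hmain]
  calc |∑ i ∈ Finset.Icc 1 r, D i| ≤ ∑ i ∈ Finset.Icc 1 r, |D i| :=
        Finset.abs_sum_le_sum_abs _ _
  _ ≤ ∑ _i ∈ Finset.Icc 1 r, (2 * δ) := Finset.sum_le_sum hDle
  _ = r * (2 * δ) := by
      rw [Finset.sum_const, Nat.card_Icc]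
      simp [nsmul_eq_mul]
  _ = 2 * r * δ := by ring
end

section
/- Consider the oblivious sampling experiment with parameters n ≥ 1, r ≥ 2, values s_i^h ∈ [−1,1] (i ∈ {1,…,r}, h ∈ {1,…,n}), p ∈ (0,1/2], γ ∈ [0,1] and λ > 0, and assume s_r^h = s_r for every h. Define σ^h := max_{i∈{1,…,r}} |s_i − s_i^h|. If there exists i ∈ {1,…,r−1} with s_i ≥ γ, then for every h with σ^h ≤ λ(1−p)/p it holds that P[J ≠ r | H = h] ≥ 1/6. -/
open MeasureTheory ENNReal

/-- The Laplace distribution with parameter `l`: the measure on `ℝ` with density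
`x ↦ exp(−|x|/l)/(2l)` with respect to Lebesgue measure. -/
noncomputable def lapMeasure (l : ℝ) : Measure ℝ :=
  MeasureTheory.volume.withDensity fun x => ENNReal.ofReal (Real.exp (-|x| / l) / (2 * l))

/-- The uniform probability measure on `Fin n`. -/
noncomputable def unifFin (n : ℕ) : Measure (Fin n) :=
  (n : ℝ≥0∞)⁻¹ • Measure.count

open Real Set Filter

lemma integral_exp_neg_div_Ioi {l : ℝ} (hl : 0 < l) (a : ℝ) :
    ∫ x in Ioi a, Real.exp (-x / l) = l * Real.exp (-a / l) := by
  have hderiv : ∀ x ∈ Ioi a, HasDerivAt (fun x => -l * Real.exp (-x / l))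
      (Real.exp (-x / l)) x := by
    intro x _
    have h1 : HasDerivAt (fun x : ℝ => -x / l) (-1 / l) x := by
      simpa using ((hasDerivAt_id x).neg.div_const l)
    have h2 := (h1.exp).const_mul (-l)
    exact h2.congr_deriv (by rw [show -l * (rexp (-x / l) * (-1 / l)) = rexp (-x / l) * (l / l) by ring, div_self hl.ne', mul_one])
  have hint : IntegrableOn (fun x => Real.exp (-x / l)) (Ioi a) := by
    have h1 := exp_neg_integrableOn_Ioi a (show 0 < 1 / l by positivity)
    refine h1.congr_fun (fun x _ => ?_) measurableSet_Ioi
    ring_nf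
  have htend : Tendsto (fun x => -l * Real.exp (-x / l)) atTop (nhds 0) := by
    have h3 : Tendsto (fun x : ℝ => -x / l) atTop atBot := by
      have h := tendsto_id.atTop_div_const hl (α := ℝ)
      have := tendsto_neg_atTop_atBot.comp h
      simpa [Function.comp_def, neg_div] using this
    have := Real.tendsto_exp_atBot.comp h3
    simpa using this.const_mul (-l)
  have hcont : ContinuousWithinAt (fun x => -l * Real.exp (-x / l)) (Ici a) a := by
    exact (Continuous.continuousWithinAt (by continuity))
  have := integral_Ioi_of_hasDerivAt_of_tendsto hcont hderiv hint htend
  rw [this]; ring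


lemma lap_intOn_Ioi {l : ℝ} (hl : 0 < l) (a : ℝ) :
    IntegrableOn (fun x => Real.exp (-x / l) / (2 * l)) (Ioi a) := by
  have h1 := exp_neg_integrableOn_Ioi a (show 0 < 1 / l by positivity)
  have h2 : IntegrableOn (fun x => Real.exp (-(1 / l) * x) / (2 * l)) (Ioi a) :=
    h1.div_const (2 * l)
  refine h2.congr_fun (fun x _ => ?_) measurableSet_Ioi
  ring_nf

lemma lap_integrable {l : ℝ} (hl : 0 < l) :
    Integrable (fun x => Real.exp (-|x| / l) / (2 * l)) := by
  rw [← integrableOn_univ, ← Set.Iic_union_Ioi (a := (0 : ℝ))]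
  refine IntegrableOn.union ?_ ?_
  · rw [← Measure.map_neg_eq_self (volume : Measure ℝ)]
    have m : MeasurableEmbedding fun x : ℝ => -x := (Homeomorph.neg ℝ).measurableEmbedding
    rw [m.integrableOn_map_iff]
    simp only [Function.comp_def, abs_neg, neg_preimage, neg_Iic, neg_zero]
    rw [integrableOn_Ici_iff_integrableOn_Ioi]
    refine (lap_intOn_Ioi hl 0).congr_fun (fun x hx => ?_) measurableSet_Ioi
    rw [abs_of_pos hx]
  · refine (lap_intOn_Ioi hl 0).congr_fun (fun x hx => ?_) measurableSet_Ioi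
    rw [abs_of_pos hx]

lemma lap_isProb {l : ℝ} (hl : 0 < l) : IsProbabilityMeasure (lapMeasure l) := by
  constructor
  rw [lapMeasure, withDensity_apply _ MeasurableSet.univ, Measure.restrict_univ,
    ← ofReal_integral_eq_lintegral_ofReal (lap_integrable hl)
      (ae_of_all _ fun x => by positivity)]
  have : ∫ x : ℝ, Real.exp (-|x| / l) / (2 * l) = 1 := by
    rw [integral_comp_abs (f := fun x => Real.exp (-x / l) / (2 * l)), integral_div,
      integral_exp_neg_div_Ioi hl 0]
    field_simp
    simp
  rw [this, ENNReal.ofReal_one]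

lemma lap_Ici {l : ℝ} (hl : 0 < l) :
    lapMeasure l (Ici l) = ENNReal.ofReal (Real.exp (-1) / 2) := by
  rw [lapMeasure, withDensity_apply _ measurableSet_Ici]
  have heq : ∀ x ∈ Ici l, ENNReal.ofReal (Real.exp (-|x| / l) / (2 * l))
      = ENNReal.ofReal (Real.exp (-x / l) / (2 * l)) := by
    intro x hx
    rw [abs_of_pos (lt_of_lt_of_le hl hx)]
  rw [setLIntegral_congr_fun measurableSet_Ici heq]
  rw [← ofReal_integral_eq_lintegral_ofReal
      (((lap_intOn_Ioi hl l).congr_set_ae Ioi_ae_eq_Ici.symm))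
      (ae_of_all _ fun x => by positivity)]
  congr 1
  rw [integral_Ici_eq_integral_Ioi, integral_div, integral_exp_neg_div_Ioi hl l]
  rw [neg_div, div_self hl.ne']
  field_simp


/-- **Halting probability of the oblivious sampling experiment for similar parties.**
In the oblivious sampling experiment, if `s_i ≥ γ` for some `i ∈ {1,…,r−1}`, then for
every `h` with `σ^h ≤ l(1−p)/p` one has `P[J ≠ r | H = h] ≥ 1/6`. -/
theorem oblivious_sampling_halting_probability
    (n r : ℕ) (hn : 1 ≤ n) (hr : 2 ≤ r)
    (s : ℕ → Fin n → ℝ) (p γ l : ℝ)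
    (hp0 : 0 < p) (hp2 : p ≤ 1 / 2) (hγ0 : 0 ≤ γ) (hγ1 : γ ≤ 1) (hl : 0 < l)
    (hs : ∀ i ∈ Finset.Icc 1 r, ∀ h, s i h ∈ Set.Icc (-1 : ℝ) 1)
    (sbar : ℕ → ℝ) (hsbar : ∀ i, sbar i = (1 / (n : ℝ)) * ∑ h, s i h)
    (hlast : ∀ h, s r h = sbar r)
    (sminus : ℕ → Fin n → ℝ)
    (hsminus : ∀ i h, sminus i h = (sbar i - p * s i h) / (1 - p))
    (μ : Measure (Fin n × (Fin (r - 1) → ℝ)))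
    (hμ : μ = (unifFin n).prod (Measure.pi fun _ : Fin (r - 1) => lapMeasure l))
    (ν : ℕ → (Fin n × (Fin (r - 1) → ℝ)) → ℝ)
    (hν : ∀ i ω, ν i ω = if hi : i - 1 < r - 1 then ω.2 ⟨i - 1, hi⟩ else 0)
    (J : (Fin n × (Fin (r - 1) → ℝ)) → ℕ)
    (hJ : ∀ ω, J ω = sInf ({i | 1 ≤ i ∧ i ≤ r - 1 ∧ γ ≤ sminus i ω.1 + ν i ω} ∪ {r}))
    (σ : Fin n → ℝ)
    (hσ : ∀ h, σ h = (Finset.Icc 1 r).sup' (Finset.nonempty_Icc.mpr (by omega))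
      (fun i => |sbar i - s i h|))
    -- some round `i ∈ {1,…,r−1}` has mean value at least `γ`
    (hbig : ∃ i, 1 ≤ i ∧ i ≤ r - 1 ∧ γ ≤ sbar i) :
    ∀ h : Fin n, σ h ≤ l * (1 - p) / p →
      (1 / 6 : ℝ≥0∞) ≤ μ {ω | J ω ≠ r ∧ ω.1 = h} / μ {ω | ω.1 = h} := by
  intro h hσh
  obtain ⟨i₀, hi1, hi2, hi3⟩ := hbig
  haveI hLP : IsProbabilityMeasure (lapMeasure l) := lap_isProb hl
  have hidx : i₀ - 1 < r - 1 := by omega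
  set idx : Fin (r - 1) := ⟨i₀ - 1, hidx⟩ with hidxdef
  have hn0 : (n : ℝ≥0∞) ≠ 0 := Nat.cast_ne_zero.mpr (by omega)
  have hninf : (n : ℝ≥0∞) ≠ ⊤ := ENNReal.natCast_ne_top n
  -- uniform measure of singleton
  have hunif : unifFin n {h} = (n : ℝ≥0∞)⁻¹ := by
    simp [unifFin, Measure.count_singleton]
  -- slice measure
  have hslice : μ {ω | ω.1 = h} = (n : ℝ≥0∞)⁻¹ := by
    have hset : {ω : Fin n × (Fin (r - 1) → ℝ) | ω.1 = h} = {h} ×ˢ Set.univ := by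
      ext ⟨a, b⟩
      simp [Set.mem_prod, eq_comm]
    rw [hμ, hset, Measure.prod_prod, measure_univ, mul_one, hunif]
  -- key inequality
  have hσi : |sbar i₀ - s i₀ h| ≤ σ h := by
    rw [hσ]
    have hmem : i₀ ∈ Finset.Icc 1 r := Finset.mem_Icc.mpr ⟨hi1, by omega⟩
    exact Finset.le_sup' (fun i => |sbar i - s i h|) hmem
  have hp1 : (0 : ℝ) < 1 - p := by linarith
  have hkey : γ - l ≤ sminus i₀ h := by
    rw [hsminus, le_div_iff₀ hp1]
    have h1 := (abs_le.mp hσi).1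
    have h2 : σ h * p ≤ l * (1 - p) := by
      have h3 := mul_le_mul_of_nonneg_right hσh hp0.le
      calc σ h * p ≤ l * (1 - p) / p * p := h3
        _ = l * (1 - p) := by field_simp
    have h3 : -(σ h) * p ≤ (sbar i₀ - s i₀ h) * p :=
      mul_le_mul_of_nonneg_right h1 hp0.le
    have h4 : γ * (1 - p) ≤ sbar i₀ * (1 - p) :=
      mul_le_mul_of_nonneg_right hi3 hp1.le
    nlinarith [h2, h3, h4]
  -- the subset
  have hsub : ({h} ×ˢ {x : Fin (r - 1) → ℝ | l ≤ x idx})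
      ⊆ {ω | J ω ≠ r ∧ ω.1 = h} := by
    rintro ⟨a, x⟩ ⟨ha, hx⟩
    have ha' : a = h := ha
    have hx' : l ≤ x idx := hx
    refine ⟨?_, ha'⟩
    have hν₀ : ν i₀ (a, x) = x idx := by
      rw [hν]; rw [dif_pos hidx]
    have hmem : i₀ ∈ ({i | 1 ≤ i ∧ i ≤ r - 1 ∧ γ ≤ sminus i (a, x).1 + ν i (a, x)}
        ∪ {r} : Set ℕ) := by
      left
      refine ⟨hi1, hi2, ?_⟩
      show γ ≤ sminus i₀ a + ν i₀ (a, x)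
      rw [hν₀, ha']
      linarith
    have hle := Nat.sInf_le hmem
    rw [hJ]
    omega
  -- lower bound for target
  have hπ : (Measure.pi fun _ : Fin (r - 1) => lapMeasure l) {x | l ≤ x idx}
      = ENNReal.ofReal (Real.exp (-1) / 2) := by
    have hset : {x : Fin (r - 1) → ℝ | l ≤ x idx}
        = Set.pi Set.univ (fun i => if i = idx then Ici l else Set.univ) := by
      ext x
      simp only [Set.mem_setOf_eq, Set.mem_pi, Set.mem_univ, forall_true_left]
      constructor
      · intro hx i
        by_cases hi : i = idx
        · subst hi; simp [hx]
        · simp [hi]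
      · intro hx
        have := hx idx
        simpa using this
    rw [hset, Measure.pi_pi]
    rw [Finset.prod_eq_single idx (fun b _ hb => by simp [hb, measure_univ]) (by simp)]
    simp [lap_Ici hl]
  have htgt : (n : ℝ≥0∞)⁻¹ * ENNReal.ofReal (Real.exp (-1) / 2)
      ≤ μ {ω | J ω ≠ r ∧ ω.1 = h} := by
    refine le_trans ?_ (measure_mono hsub)
    rw [hμ, Measure.prod_prod, hunif, hπ]
  -- conclude
  rw [hslice]
  have hinv0 : ((n : ℝ≥0∞)⁻¹) ≠ 0 := ENNReal.inv_ne_zero.mpr hninf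
  have hinvt : ((n : ℝ≥0∞)⁻¹) ≠ ⊤ := ENNReal.inv_ne_top.mpr hn0
  have hc : ENNReal.ofReal (Real.exp (-1) / 2)
      ≤ μ {ω | J ω ≠ r ∧ ω.1 = h} / (n : ℝ≥0∞)⁻¹ := by
    calc ENNReal.ofReal (Real.exp (-1) / 2)
        = (n : ℝ≥0∞)⁻¹ * ENNReal.ofReal (Real.exp (-1) / 2) / (n : ℝ≥0∞)⁻¹ := by
          rw [mul_comm, mul_div_assoc, ENNReal.div_self hinv0 hinvt, mul_one]
      _ ≤ _ := ENNReal.div_le_div_right htgt _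
  refine le_trans ?_ hc
  have h16 : (1 / 6 : ℝ≥0∞) = ENNReal.ofReal (1 / 6) := by
    rw [ENNReal.ofReal_div_of_pos (by norm_num)]
    norm_num
  rw [h16]
  apply ENNReal.ofReal_le_ofReal
  have he3 : Real.exp 1 ≤ 3 := by nlinarith [Real.exp_one_lt_d9]
  have hep := Real.exp_pos 1
  rw [Real.exp_neg, inv_eq_one_div, div_div]
  rw [div_le_div_iff₀ (by norm_num) (by positivity)]
  nlinarith
end

section
/- Let p ∈ (0,1/2], λ ∈ (0,1], β ≥ 0 and α ∈ (0,1] with α ≤ λ(1−p)/(2p). Let S be a random variable with 0 ≤ S ≤ 2 almost surely such that P[S ≥ ρ·α] ≤ β/ρ for every real ρ ≥ 1. Then 𝔼[ S · 1{S ≥ (1−p)λ/p} ] ≤ 2αβ·log(1/λ) + 2αβ. -/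
open MeasureTheory ENNReal

/-- **Expectation of the similarity gap on the non-similar event.**
If `0 ≤ S ≤ 2` a.s. and `P[S ≥ ρα] ≤ β/ρ` for every `ρ ≥ 1`, where `p ∈ (0,1/2]`,
`λ ∈ (0,1]`, `β ≥ 0`, `α ∈ (0,1]` and `α ≤ λ(1−p)/(2p)`, then
`𝔼[S · 1{S ≥ (1−p)λ/p}] ≤ 2αβ log(1/λ) + 2αβ`. -/
theorem expectation_gap_nonsimilar
    {Ω : Type*} [MeasurableSpace Ω] (μ : Measure Ω) [IsProbabilityMeasure μ]
    (p l α β : ℝ)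
    (hp0 : 0 < p) (hp2 : p ≤ 1 / 2) (hl0 : 0 < l) (hl1 : l ≤ 1)
    (hβ : 0 ≤ β) (hα0 : 0 < α) (hα1 : α ≤ 1) (hαl : α ≤ l * (1 - p) / (2 * p))
    (S : Ω → ℝ) (hS : Measurable S)
    (hSrange : ∀ᵐ ω ∂μ, S ω ∈ Set.Icc (0 : ℝ) 2)
    (htail : ∀ ρ : ℝ, 1 ≤ ρ → μ {ω | ρ * α ≤ S ω} ≤ ENNReal.ofReal (β / ρ)) :
    ∫ ω, (if (1 - p) * l / p ≤ S ω then S ω else 0) ∂μ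
      ≤ 2 * α * β * Real.logb 2 (1 / l) + 2 * α * β := by
  set T : ℝ := (1 - p) * l / p with hTdef
  have hp1 : p < 1 := lt_of_le_of_lt hp2 (by norm_num)
  have h1p : 0 < 1 - p := by linarith
  have hT0 : 0 < T := by positivity
  have hhalf : l * (1 - p) / (2 * p) = T / 2 := by rw [hTdef]; ring
  have hT2α : 2 * α ≤ T := by rw [hhalf] at hαl; linarith
  have hTl : l ≤ T := by
    rw [hTdef, le_div_iff₀ hp0]; nlinarith
  have hαβ : 0 ≤ α * β := by positivity
  have hlogb0 : 0 ≤ Real.logb 2 (1 / l) :=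
    Real.logb_nonneg (by norm_num) (one_le_one_div hl0 hl1)
  have hnull : μ {a | 2 < S a} = 0 := by
    refine measure_mono_null ?_ (ae_iff.mp hSrange)
    intro a ha
    simp only [Set.mem_setOf_eq, Set.mem_Icc, not_and_or, not_le] at *
    right; exact ha
  set g : Ω → ℝ := fun ω => if T ≤ S ω then S ω else 0 with hgdef
  have hgm : Measurable g :=
    Measurable.ite (measurableSet_le measurable_const hS) hS measurable_const
  have g_nn : 0 ≤ᵐ[μ] g := by
    filter_upwards [hSrange] with ω hω
    simp only [hgdef, Pi.zero_apply]
    split_ifs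
    · exact hω.1
    · exact le_rfl
  have g_int : Integrable g μ := by
    refine (integrable_const (2 : ℝ)).mono' hgm.aestronglyMeasurable ?_
    filter_upwards [hSrange] with ω hω
    simp only [hgdef, Real.norm_eq_abs]
    split_ifs
    · rw [abs_of_nonneg hω.1]; exact hω.2
    · simp
  by_cases hT2 : T ≤ 2
  · -- main case via layer cake
    rw [show (∫ ω, (if T ≤ S ω then S ω else 0) ∂μ) = ∫ ω, g ω ∂μ from rfl,
      g_int.integral_eq_integral_meas_lt g_nn]
    set h : ℝ → ℝ := fun t =>
      Set.indicator (Set.Ioc 0 T) (fun _ => α * β / T) t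
        + Set.indicator (Set.Ioc T 2) (fun t => α * β / t) t with hhdef
    have hind2_nn : ∀ t : ℝ, 0 ≤ Set.indicator (Set.Ioc T 2) (fun t => α * β / t) t := by
      intro t
      apply Set.indicator_nonneg
      intro x hx
      have : 0 < x := lt_trans hT0 hx.1
      positivity
    have hind1_nn : ∀ t : ℝ, 0 ≤ Set.indicator (Set.Ioc 0 T) (fun _ => α * β / T) t := by
      intro t
      apply Set.indicator_nonneg
      intro x _
      positivity
    -- integrability of h pieces
    have hint1 : Integrable (Set.indicator (Set.Ioc 0 T) (fun _ => α * β / T)) volume := by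
      refine IntegrableOn.integrable_indicator ?_ measurableSet_Ioc
      exact integrableOn_const (by simp [Real.volume_Ioc])
    have hII : IntervalIntegrable (fun t : ℝ => α * β / t) volume T 2 := by
      have h1 : IntervalIntegrable (fun t : ℝ => 1 / t) volume T 2 := by
        apply intervalIntegral.intervalIntegrable_one_div (f := fun t : ℝ => t)
        · intro x hx
          have h0 : 0 < x := by
            rcases Set.mem_uIcc.mp hx with h | h
            · exact lt_of_lt_of_le hT0 h.1
            · linarith [h.1]
          exact ne_of_gt h0
        · exact continuousOn_id
      have := h1.const_mul (α * β)
      simpa [div_eq_mul_inv, mul_comm, mul_assoc] using this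
    have hint2 : Integrable (Set.indicator (Set.Ioc T 2) (fun t => α * β / t)) volume := by
      refine IntegrableOn.integrable_indicator ?_ measurableSet_Ioc
      rw [← Set.uIoc_of_le hT2]
      exact hII.def'
    have hint : Integrable h (volume.restrict (Set.Ioi (0:ℝ))) :=
      ((hint1.add hint2).restrict)
    -- pointwise bound
    have hbound : ∀ t : ℝ, t ∈ Set.Ioi (0:ℝ) →
        (μ {a | t < g a}).toReal ≤ h t := by
      intro t ht
      have ht0 : 0 < t := ht
      rcases le_or_gt t T with h1 | h1
      · -- t ≤ T
        have hsub : {a | t < g a} ⊆ {a | T ≤ S a} := by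
          intro a ha
          simp only [hgdef, Set.mem_setOf_eq] at ha ⊢
          by_contra hc
          rw [if_neg hc] at ha; linarith
        have hρ : (1:ℝ) ≤ T / α := by
          rw [le_div_iff₀ hα0]; linarith
        have hmeas : μ {a | t < g a} ≤ ENNReal.ofReal (α * β / T) := by
          refine le_trans (measure_mono hsub) ?_
          have := htail (T / α) hρ
          rw [div_mul_cancel₀ _ (ne_of_gt hα0), div_div_eq_mul_div, mul_comm β α] at this
          exact this
        have hle : (μ {a | t < g a}).toReal ≤ α * β / T :=
          ENNReal.toReal_le_of_le_ofReal (by positivity) hmeas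
        have hmem : t ∈ Set.Ioc 0 T := ⟨ht0, h1⟩
        calc (μ {a | t < g a}).toReal ≤ α * β / T := hle
          _ = Set.indicator (Set.Ioc 0 T) (fun _ => α * β / T) t := by
              rw [Set.indicator_of_mem hmem]
          _ ≤ h t := le_add_of_nonneg_right (hind2_nn t)
      · rcases le_or_gt t 2 with h2 | h2
        · -- T < t ≤ 2
          have hsub : {a | t < g a} ⊆ {a | t ≤ S a} := by
            intro a ha
            simp only [hgdef, Set.mem_setOf_eq] at ha ⊢
            by_contra hc
            push_neg at hc
            split_ifs at ha with hb
            · linarith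
            · linarith
          have hρ : (1:ℝ) ≤ t / α := by
            rw [le_div_iff₀ hα0]; linarith
          have hmeas : μ {a | t < g a} ≤ ENNReal.ofReal (α * β / t) := by
            refine le_trans (measure_mono hsub) ?_
            have := htail (t / α) hρ
            rw [div_mul_cancel₀ _ (ne_of_gt hα0), div_div_eq_mul_div, mul_comm β α] at this
            exact this
          have hle : (μ {a | t < g a}).toReal ≤ α * β / t :=
            ENNReal.toReal_le_of_le_ofReal (by positivity) hmeas
          have hmem : t ∈ Set.Ioc T 2 := ⟨h1, h2⟩
          have hnotmem : t ∉ Set.Ioc (0:ℝ) T := by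
            simp only [Set.mem_Ioc, not_and, not_le]
            intro _; exact h1
          calc (μ {a | t < g a}).toReal ≤ α * β / t := hle
            _ = h t := by
                simp only [hhdef, Set.indicator_of_mem hmem, Set.indicator_of_notMem hnotmem,
                  zero_add]
        · -- t > 2
          have hsub : {a | t < g a} ⊆ {a | 2 < S a} := by
            intro a ha
            simp only [hgdef, Set.mem_setOf_eq] at ha ⊢
            split_ifs at ha with hb
            · linarith
            · linarith
          have : μ {a | t < g a} = 0 :=
            measure_mono_null hsub hnull
          rw [this]
          simp only [ENNReal.toReal_zero]
          exact add_nonneg (hind1_nn t) (hind2_nn t)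
    -- integrate the bound
    have hmono : (∫ t in Set.Ioi (0:ℝ), (μ {a | t < g a}).toReal)
        ≤ ∫ t in Set.Ioi (0:ℝ), h t := by
      refine integral_mono_of_nonneg ?_ hint ?_
      · exact Filter.Eventually.of_forall fun t => ENNReal.toReal_nonneg
      · exact (ae_restrict_iff' measurableSet_Ioi).mpr (Filter.Eventually.of_forall hbound)
    refine le_trans hmono ?_
    -- compute ∫ h
    have hsplit : (∫ t in Set.Ioi (0:ℝ), h t)
        = (∫ t in Set.Ioi (0:ℝ), Set.indicator (Set.Ioc 0 T) (fun _ => α * β / T) t)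
          + ∫ t in Set.Ioi (0:ℝ), Set.indicator (Set.Ioc T 2) (fun t => α * β / t) t := by
      exact integral_add hint1.restrict hint2.restrict
    have hc1 : (∫ t in Set.Ioi (0:ℝ), Set.indicator (Set.Ioc 0 T) (fun _ => α * β / T) t)
        = α * β := by
      rw [setIntegral_indicator measurableSet_Ioc]
      rw [show Set.Ioi (0:ℝ) ∩ Set.Ioc 0 T = Set.Ioc 0 T by
        rw [Set.inter_eq_right]; exact Set.Ioc_subset_Ioi_self.trans (le_refl _)]
      rw [setIntegral_const, Real.volume_real_Ioc_of_le (by linarith), sub_zero, smul_eq_mul]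
      field_simp
    have hc2 : (∫ t in Set.Ioi (0:ℝ), Set.indicator (Set.Ioc T 2) (fun t => α * β / t) t)
        = α * β * Real.log (2 / T) := by
      rw [setIntegral_indicator measurableSet_Ioc]
      rw [show Set.Ioi (0:ℝ) ∩ Set.Ioc T 2 = Set.Ioc T 2 by
        rw [Set.inter_eq_right]; intro x hx; exact lt_trans hT0 hx.1]
      rw [← intervalIntegral.integral_of_le hT2]
      have : (∫ t in T..2, α * β / t) = α * β * ∫ t in T..2, 1 / t := by
        rw [← intervalIntegral.integral_const_mul]
        congr 1; ext t; ring
      rw [this, integral_one_div]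
      intro hx
      rcases Set.mem_uIcc.mp hx with h | h
      · linarith [h.1]
      · linarith [h.1]
    rw [hsplit, hc1, hc2]
    -- final arithmetic
    have hL1 : Real.log 2 < 1 := by
      have := Real.log_two_lt_d9; linarith
    have hL0 : 0 < Real.log 2 := Real.log_pos (by norm_num)
    have hlog_mono : Real.log (2 / T) ≤ Real.log (2 / l) := by
      apply Real.log_le_log (by positivity)
      apply div_le_div_of_nonneg_left (by norm_num) hl0 hTl
    have hld : Real.log (2 / l) = Real.log 2 - Real.log l :=
      Real.log_div (by norm_num) (ne_of_gt hl0)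
    have hinv : Real.log (1 / l) = -Real.log l := by
      rw [one_div, Real.log_inv]
    have hc : Real.log l ≤ 0 := Real.log_nonpos (le_of_lt hl0) hl1
    have hbterm : α * β * (-Real.log l) ≤ 2 * α * β * Real.logb 2 (1 / l) := by
      rw [Real.logb, hinv, show 2 * α * β * (-Real.log l / Real.log 2)
        = (2 * α * β * (-Real.log l)) / Real.log 2 by ring, le_div_iff₀ hL0]
      nlinarith [mul_nonneg hαβ (neg_nonneg.mpr hc)]
    nlinarith [mul_le_mul_of_nonneg_left hlog_mono hαβ]
  · -- degenerate case T > 2 : g = 0 a.e.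
    push_neg at hT2
    have hg0 : g =ᵐ[μ] 0 := by
      filter_upwards [hSrange] with ω hω
      simp only [hgdef, Pi.zero_apply]
      rw [if_neg]
      intro hc
      linarith [hω.2]
    rw [show (∫ ω, (if T ≤ S ω then S ω else 0) ∂μ) = ∫ ω, g ω ∂μ from rfl,
      integral_congr_ae hg0]
    simp only [Pi.zero_apply, integral_zero]
    nlinarith
end

section
/- Let p ∈ (0,1/2], λ > 0, β ≥ 0 and α ∈ (0,1] with α ≤ λ(1−p)/(2p). Let S be a random variable with 0 ≤ S ≤ 2 almost surely such that P[S ≥ ρ·α] ≤ β/ρ for every real ρ ≥ 1. Then 𝔼[ S² · 1{α ≤ S ≤ (1−p)λ/p} ] ≤ 4·(1−p)·λ·α·β/p. -/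
open MeasureTheory ENNReal

/-- **Second moment of the similarity gap on the intermediate event.**
If `0 ≤ S ≤ 2` a.s. and `P[S ≥ ρα] ≤ β/ρ` for every `ρ ≥ 1`, where `p ∈ (0,1/2]`,
`λ > 0`, `β ≥ 0`, `α ∈ (0,1]` and `α ≤ λ(1−p)/(2p)`, then
`𝔼[S² · 1{α ≤ S ≤ (1−p)λ/p}] ≤ 4(1−p)λαβ/p`. -/
theorem expectation_sq_gap_intermediate
    {Ω : Type*} [MeasurableSpace Ω] (μ : Measure Ω) [IsProbabilityMeasure μ]
    (p l α β : ℝ)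
    (hp0 : 0 < p) (hp2 : p ≤ 1 / 2) (hl0 : 0 < l)
    (hβ : 0 ≤ β) (hα0 : 0 < α) (hα1 : α ≤ 1) (hαl : α ≤ l * (1 - p) / (2 * p))
    (S : Ω → ℝ) (hS : Measurable S)
    (hSrange : ∀ᵐ ω ∂μ, S ω ∈ Set.Icc (0 : ℝ) 2)
    (htail : ∀ ρ : ℝ, 1 ≤ ρ → μ {ω | ρ * α ≤ S ω} ≤ ENNReal.ofReal (β / ρ)) :
    ∫ ω, (if α ≤ S ω ∧ S ω ≤ (1 - p) * l / p then (S ω) ^ 2 else 0) ∂μ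
      ≤ 4 * (1 - p) * l * α * β / p := by
  have hp1 : p < 1 := lt_of_le_of_lt hp2 (by norm_num)
  have h1p : 0 < 1 - p := by linarith
  set M : ℝ := (1 - p) * l / p with hM
  have hM0 : 0 < M := div_pos (mul_pos h1p hl0) hp0
  have hαM2 : 2 * α ≤ M := by
    have : l * (1 - p) / (2 * p) = M / 2 := by rw [hM]; ring
    linarith [hαl.trans_eq this]
  have hαM : α ≤ M := by linarith
  have hαsq : α ^ 2 ≤ M ^ 2 := by nlinarith
  set f : Ω → ℝ := fun ω => if α ≤ S ω ∧ S ω ≤ M then (S ω) ^ 2 else 0 with hfdef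
  have hf_meas : Measurable f := by
    apply Measurable.ite _ (hS.pow_const 2) measurable_const
    exact (measurableSet_le measurable_const hS).inter (measurableSet_le hS measurable_const)
  have hf_nn : ∀ ω, 0 ≤ f ω := by
    intro ω; simp only [hfdef]; split
    · positivity
    · exact le_refl 0
  have hf_le : ∀ ω, f ω ≤ M ^ 2 := by
    intro ω; simp only [hfdef]; split
    · rename_i h
      have h0 : 0 ≤ S ω := (le_trans hα0.le h.1)
      nlinarith [h.2]
    · positivity
  have hf_int : Integrable f μ := by
    refine (integrable_const (M ^ 2)).mono' hf_meas.aestronglyMeasurable ?_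
    filter_upwards with ω
    rw [Real.norm_eq_abs, abs_of_nonneg (hf_nn ω)]
    exact hf_le ω
  rw [integral_eq_lintegral_of_nonneg_ae (Filter.Eventually.of_forall hf_nn)
      hf_meas.aestronglyMeasurable]
  have htarget : (0:ℝ) ≤ 4 * (1 - p) * l * α * β / p := by positivity
  refine ENNReal.toReal_le_of_le_ofReal htarget ?_
  rw [lintegral_eq_lintegral_meas_le μ (Filter.Eventually.of_forall hf_nn)
      hf_meas.aemeasurable]
  -- pointwise tail bound
  set g : ℝ → ℝ≥0∞ := fun t =>
    Set.indicator (Set.Ioc 0 (α ^ 2)) (fun _ => ENNReal.ofReal β) t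
      + Set.indicator (Set.Ioc (α ^ 2) (M ^ 2)) (fun t => ENNReal.ofReal (α * β / Real.sqrt t)) t
    with hgdef
  have hbound : ∀ t ∈ Set.Ioi (0:ℝ), μ {a | t ≤ f a} ≤ g t := by
    intro t ht
    simp only [Set.mem_Ioi] at ht
    by_cases h1 : t ≤ α ^ 2
    · have hsub : {a | t ≤ f a} ⊆ {ω | 1 * α ≤ S ω} := by
        intro a ha
        simp only [Set.mem_setOf_eq, hfdef] at ha ⊢
        rw [one_mul]
        by_contra hcon
        push_neg at hcon
        rw [if_neg (by intro hc; exact absurd hc.1 (not_le.mpr hcon))] at ha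
        linarith
      calc μ {a | t ≤ f a} ≤ μ {ω | 1 * α ≤ S ω} := measure_mono hsub
        _ ≤ ENNReal.ofReal (β / 1) := htail 1 le_rfl
        _ = g t := by
            rw [hgdef]
            simp only [Set.indicator_of_mem (Set.mem_Ioc.mpr ⟨ht, h1⟩),
              Set.indicator_of_notMem (by simp [Set.mem_Ioc]; intro h; linarith : t ∉ Set.Ioc (α^2) (M^2))]
            simp
    · push_neg at h1
      by_cases h2 : t ≤ M ^ 2
      · set ρ : ℝ := Real.sqrt t / α with hρ
        have hst : α < Real.sqrt t := by
          have := Real.sqrt_lt_sqrt (by positivity) h1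
          rwa [Real.sqrt_sq hα0.le] at this
        have hρ1 : 1 ≤ ρ := by
          rw [hρ, le_div_iff₀ hα0]; linarith
        have hρα : ρ * α = Real.sqrt t := div_mul_cancel₀ _ (ne_of_gt hα0)
        have hsub : {a | t ≤ f a} ⊆ {ω | ρ * α ≤ S ω} := by
          intro a ha
          simp only [Set.mem_setOf_eq, hfdef] at ha ⊢
          rw [hρα]
          by_cases hc : α ≤ S a ∧ S a ≤ M
          · rw [if_pos hc] at ha
            have h0 : 0 ≤ S a := le_trans hα0.le hc.1
            calc Real.sqrt t ≤ Real.sqrt ((S a) ^ 2) := Real.sqrt_le_sqrt ha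
              _ = S a := by rw [Real.sqrt_sq h0]
          · rw [if_neg hc] at ha; linarith
        have hβρ : β / ρ = α * β / Real.sqrt t := by
          rw [hρ]
          field_simp
        calc μ {a | t ≤ f a} ≤ μ {ω | ρ * α ≤ S ω} := measure_mono hsub
          _ ≤ ENNReal.ofReal (β / ρ) := htail ρ hρ1
          _ = ENNReal.ofReal (α * β / Real.sqrt t) := by rw [hβρ]
          _ ≤ g t := by
              rw [hgdef]
              simp only [Set.indicator_of_mem (Set.mem_Ioc.mpr ⟨h1, h2⟩),
                Set.indicator_of_notMem (by simp [Set.mem_Ioc]; intro h; linarith : t ∉ Set.Ioc 0 (α^2))]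
              simp
      · push_neg at h2
        have : {a | t ≤ f a} = ∅ := by
          ext a
          simp only [Set.mem_setOf_eq, Set.mem_empty_iff_false, iff_false, not_le]
          exact lt_of_le_of_lt (hf_le a) h2
        rw [this]
        simp
  calc ∫⁻ t in Set.Ioi 0, μ {a | t ≤ f a}
      ≤ ∫⁻ t in Set.Ioi 0, g t := by
        apply setLIntegral_mono' measurableSet_Ioi hbound
    _ ≤ ∫⁻ t, g t := setLIntegral_le_lintegral _ _
    _ ≤ ENNReal.ofReal (4 * (1 - p) * l * α * β / p) := by
        have hcont : ContinuousOn (fun t : ℝ => α * β / Real.sqrt t) (Set.Icc (α ^ 2) (M ^ 2)) := by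
          apply ContinuousOn.div continuousOn_const Real.continuous_sqrt.continuousOn
          intro x hx
          have hx0 : 0 < x := lt_of_lt_of_le (by positivity) hx.1
          exact (Real.sqrt_pos.mpr hx0).ne'
        have hint : IntegrableOn (fun t : ℝ => α * β / Real.sqrt t) (Set.Ioc (α ^ 2) (M ^ 2)) volume :=
          (hcont.integrableOn_Icc).mono_set Set.Ioc_subset_Icc_self
        have hval : ∫ t in Set.Ioc (α ^ 2) (M ^ 2), α * β / Real.sqrt t
            = 2 * α * β * M - 2 * α * β * α := by
          rw [← intervalIntegral.integral_of_le hαsq]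
          have hd : ∀ x ∈ Set.uIcc (α ^ 2) (M ^ 2),
              HasDerivAt (fun t : ℝ => 2 * α * β * Real.sqrt t) (α * β / Real.sqrt x) x := by
            intro x hx
            rw [Set.uIcc_of_le hαsq] at hx
            have hx0 : 0 < x := lt_of_lt_of_le (by positivity) hx.1
            have hs0 : 0 < Real.sqrt x := Real.sqrt_pos.mpr hx0
            have := (Real.hasDerivAt_sqrt hx0.ne').const_mul (2 * α * β)
            refine this.congr_deriv ?_
            ring
          have hii : IntervalIntegrable (fun t : ℝ => α * β / Real.sqrt t)
              volume (α ^ 2) (M ^ 2) := by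
            apply ContinuousOn.intervalIntegrable
            rwa [Set.uIcc_of_le hαsq]
          rw [intervalIntegral.integral_eq_sub_of_hasDerivAt hd hii]
          rw [Real.sqrt_sq hM0.le, Real.sqrt_sq hα0.le]
        have hnn2 : 0 ≤ 2 * α * β * M - 2 * α * β * α := by
          have h := mul_nonneg (by positivity : (0:ℝ) ≤ 2 * α * β) (sub_nonneg.mpr hαM)
          nlinarith
        rw [hgdef]
        rw [lintegral_add_left ((measurable_const).indicator measurableSet_Ioc)]
        rw [lintegral_indicator measurableSet_Ioc, lintegral_indicator measurableSet_Ioc]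
        rw [setLIntegral_const]
        rw [← ofReal_integral_eq_lintegral_ofReal hint
          (Filter.Eventually.of_forall fun t => by positivity)]
        rw [hval, Real.volume_Ioc]
        have h1 : ENNReal.ofReal β * ENNReal.ofReal (α ^ 2 - 0)
            = ENNReal.ofReal (β * α ^ 2) := by
          rw [← ENNReal.ofReal_mul hβ]; ring_nf
        rw [h1, ← ENNReal.ofReal_add (by positivity) hnn2]
        apply ENNReal.ofReal_le_ofReal
        have heq : 4 * (1 - p) * l * α * β / p = 4 * M * α * β := by rw [hM]; ring
        rw [heq]
        nlinarith [mul_nonneg (mul_nonneg hα0.le hβ) hM0.le, mul_nonneg (mul_nonneg hα0.le hα0.le) hβ]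
end

section
/- Let λ > 0 and γ, γ' ∈ ℝ with |γ' − γ| ≤ 1, and set ε := |γ' − γ|, p := Lap(λ){ y : y ≥ λγ } and p' := Lap(λ){ y : y ≥ λγ' }. Then (1 − 5ε)·p' ≤ p ≤ (1 + 5ε)·p'. -/
open MeasureTheory ENNReal

open Real Set

/-- The tail function of the standard Laplace distribution. -/
noncomputable def lapTail (t : ℝ) : ℝ := if 0 ≤ t then Real.exp (-t) / 2 else 1 - Real.exp t / 2

lemma lapTail_nonneg (t : ℝ) : 0 ≤ lapTail t := by
  unfold lapTail
  split_ifs with h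
  · positivity
  · have : Real.exp t ≤ 1 := Real.exp_le_one_iff.2 (le_of_not_ge h)
    linarith

lemma integrableOn_expabs (γ : ℝ) :
    IntegrableOn (fun y : ℝ => Real.exp (-|y|) / 2) (Ioi γ) := by
  have hIoi0 : IntegrableOn (fun y : ℝ => Real.exp (-|y|) / 2) (Ioi (0 : ℝ)) := by
    have h : IntegrableOn (fun x : ℝ => Real.exp (-1 * x) / 2) (Ioi (0:ℝ)) :=
      (exp_neg_integrableOn_Ioi (0 : ℝ) (by norm_num : (0:ℝ) < 1)).div_const 2
    refine h.congr_fun (fun x hx => ?_) measurableSet_Ioi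
    rw [abs_of_nonneg (le_of_lt hx)]
    norm_num
  rcases le_or_gt 0 γ with h | h
  · exact hIoi0.mono_set (Ioi_subset_Ioi h)
  · have h1 : IntegrableOn (fun y : ℝ => Real.exp (-|y|) / 2) (Ioc γ 0) := by
      apply Continuous.integrableOn_Ioc
      continuity
    have := h1.union hIoi0
    rwa [Ioc_union_Ioi_eq_Ioi h.le] at this

lemma integral_expabs_Ioi (γ : ℝ) (hγ : 0 ≤ γ) :
    ∫ y in Ioi γ, Real.exp (-|y|) / 2 = Real.exp (-γ) / 2 := by
  rw [setIntegral_congr_fun measurableSet_Ioi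
    (fun x hx => by rw [abs_of_nonneg (hγ.trans (le_of_lt hx))] : EqOn _
      (fun y : ℝ => Real.exp (-y) / 2) (Ioi γ))]
  rw [integral_div, integral_exp_neg_Ioi]

lemma lapTail_integral (γ : ℝ) :
    ∫ y in Ioi γ, Real.exp (-|y|) / 2 = lapTail γ := by
  unfold lapTail
  split_ifs with h
  · exact integral_expabs_Ioi γ h
  · push_neg at h
    rw [← Ioc_union_Ioi_eq_Ioi h.le,
      setIntegral_union (Ioc_disjoint_Ioi le_rfl) measurableSet_Ioi
        ((integrableOn_expabs γ).mono_set Ioc_subset_Ioi_self) (integrableOn_expabs 0)]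
    rw [integral_expabs_Ioi 0 le_rfl]
    have h1 : ∫ y in Ioc γ (0:ℝ), Real.exp (-|y|) / 2 = ∫ y in Ioc γ (0:ℝ), Real.exp y / 2 := by
      refine setIntegral_congr_fun measurableSet_Ioc (fun x hx => ?_)
      rw [abs_of_nonpos hx.2, neg_neg]
    rw [h1, ← intervalIntegral.integral_of_le h.le, intervalIntegral.integral_div,
      integral_exp]
    simp [Real.exp_zero]
    ring

lemma lapMeasure_tail_toReal (l γ : ℝ) (hl : 0 < l) :
    (lapMeasure l {y : ℝ | l * γ ≤ y}).toReal = lapTail γ := by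
  have hset : {y : ℝ | l * γ ≤ y} = Ici (l * γ) := rfl
  rw [hset]
  unfold lapMeasure
  rw [withDensity_apply _ measurableSet_Ici]
  have hnn : 0 ≤ᵐ[volume.restrict (Ici (l * γ))]
      fun x : ℝ => Real.exp (-|x| / l) / (2 * l) := by
    filter_upwards with x
    positivity
  have hmeas : AEStronglyMeasurable (fun x : ℝ => Real.exp (-|x| / l) / (2 * l))
      (volume.restrict (Ici (l * γ))) := by
    apply Continuous.aestronglyMeasurable
    continuity
  rw [← integral_eq_lintegral_of_nonneg_ae hnn hmeas]
  rw [integral_Ici_eq_integral_Ioi]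
  have hcongr : ∫ x in Ioi (l * γ), Real.exp (-|x| / l) / (2 * l)
      = ∫ x in Ioi (l * γ), (fun y : ℝ => Real.exp (-|y|) / 2) (x * l⁻¹) * l⁻¹ := by
    refine setIntegral_congr_fun measurableSet_Ioi (fun x _ => ?_)
    have : |x * l⁻¹| = |x| * l⁻¹ := by
      rw [abs_mul, abs_of_nonneg (by positivity : (0:ℝ) ≤ l⁻¹)]
    simp only [this]
    rw [neg_div, div_eq_mul_inv (|x|) l]
    field_simp
  rw [hcongr]
  rw [MeasureTheory.integral_mul_const]
  rw [integral_comp_mul_right_Ioi (fun y : ℝ => Real.exp (-|y|) / 2) (l * γ)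
    (by positivity : (0:ℝ) < l⁻¹)]
  have : l * γ * l⁻¹ = γ := by field_simp
  rw [this, lapTail_integral, smul_eq_mul]
  field_simp

lemma lapTail_anti {s s' : ℝ} (h : s ≤ s') : lapTail s' ≤ lapTail s := by
  unfold lapTail
  have e1 := Real.exp_pos s
  have e2 := Real.exp_pos s'
  split_ifs with h1 h2 h2
  · have : Real.exp (-s') ≤ Real.exp (-s) := Real.exp_le_exp.2 (by linarith)
    linarith
  · have h3 : Real.exp s ≤ 1 := Real.exp_le_one_iff.2 (by linarith)
    have h4 : Real.exp (-s') ≤ 1 := Real.exp_le_one_iff.2 (by linarith)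
    linarith
  · exact absurd (h2.trans h) h1
  · have : Real.exp s ≤ Real.exp s' := Real.exp_le_exp.2 h
    linarith

lemma lapTail_key {s s' : ℝ} (h : s ≤ s') :
    Real.exp s * lapTail s ≤ Real.exp s' * lapTail s' := by
  unfold lapTail
  have e1 := Real.exp_pos s
  have e2 := Real.exp_pos s'
  have emul : Real.exp s * Real.exp (-s) = 1 := by rw [← Real.exp_add]; simp
  have emul' : Real.exp s' * Real.exp (-s') = 1 := by rw [← Real.exp_add]; simp
  split_ifs with h1 h2 h2
  · nlinarith
  · linarith [h2 (h1.trans h)]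
  · have h3 : Real.exp s ≤ 1 := Real.exp_le_one_iff.2 (by linarith)
    nlinarith
  · have h3 : Real.exp s ≤ Real.exp s' := Real.exp_le_exp.2 h
    have h4 : Real.exp s' ≤ 1 := Real.exp_le_one_iff.2 (by linarith)
    nlinarith

lemma lapTail_ratio (s s' : ℝ) : lapTail s ≤ Real.exp |s' - s| * lapTail s' := by
  rcases le_total s s' with h | h
  · rw [abs_of_nonneg (sub_nonneg.2 h), Real.exp_sub, div_mul_eq_mul_div,
      le_div_iff₀ (Real.exp_pos s), mul_comm]
    exact lapTail_key h
  · have h1 := lapTail_anti h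
    have h2 : (1:ℝ) ≤ Real.exp |s' - s| := Real.one_le_exp (abs_nonneg _)
    nlinarith [lapTail_nonneg s']

/-- **Stability of Laplace tail probabilities:** for `l > 0` and `γ, γ'` with
`ε := |γ' − γ| ≤ 1`, the tail probabilities `p = Lap(l){y ≥ lγ}` and
`p' = Lap(l){y ≥ lγ'}` satisfy `(1 − 5ε) p' ≤ p ≤ (1 + 5ε) p'`. -/
theorem laplace_tail_stability (l γ γ' : ℝ) (hl : 0 < l)
    (hε : |γ' - γ| ≤ 1) :
    (1 - 5 * |γ' - γ|) * (lapMeasure l {y : ℝ | l * γ' ≤ y}).toReal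
        ≤ (lapMeasure l {y : ℝ | l * γ ≤ y}).toReal ∧
      (lapMeasure l {y : ℝ | l * γ ≤ y}).toReal
        ≤ (1 + 5 * |γ' - γ|) * (lapMeasure l {y : ℝ | l * γ' ≤ y}).toReal := by
  rw [lapMeasure_tail_toReal l γ hl, lapMeasure_tail_toReal l γ' hl]
  set ε := |γ' - γ| with hεdef
  have hε0 : 0 ≤ ε := abs_nonneg _
  have h1 : lapTail γ ≤ Real.exp ε * lapTail γ' := lapTail_ratio γ γ'
  have h2 : lapTail γ' ≤ Real.exp ε * lapTail γ := by
    have := lapTail_ratio γ' γ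
    rwa [abs_sub_comm, ← hεdef] at this
  have hexp : Real.exp ε ≤ 1 + 5 * ε := by
    rcases le_or_gt ε (4/5) with h | h
    · have ha : 1 - ε ≤ Real.exp (-ε) := by
        have := Real.add_one_le_exp (-ε); linarith
      have hb : Real.exp ε * Real.exp (-ε) = 1 := by rw [← Real.exp_add]; simp
      nlinarith [Real.exp_pos ε, Real.exp_pos (-ε)]
    · have hc := Real.exp_one_lt_d9
      have hd : Real.exp ε ≤ Real.exp 1 := Real.exp_le_exp.2 hε
      linarith
  have hT := lapTail_nonneg γ
  have hT' := lapTail_nonneg γ'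
  constructor
  · rcases le_or_gt (1 - 5 * ε) 0 with h | h
    · nlinarith
    · nlinarith [mul_le_mul_of_nonneg_left h2 h.le,
        mul_le_mul_of_nonneg_left (mul_le_mul_of_nonneg_right hexp hT) h.le,
        mul_nonneg (mul_nonneg hε0 hε0) hT]
  · calc lapTail γ ≤ Real.exp ε * lapTail γ' := h1
      _ ≤ (1 + 5 * ε) * lapTail γ' := mul_le_mul_of_nonneg_right hexp hT'
end

section
/- Let r ≥ 1, let p₁,…,p_r and p'₁,…,p'_r be sequences in [0,1] with p_r = p'_r = 1, define q_i := p_i·∏_{j<i}(1−p_j) and q'_i := p'_i·∏_{j<i}(1−p'_j), and let ε ≥ 0 be such that the two sequences are ε-ratio-close. Then Σ_{i=1}^{r−1} |q_i − q'_i| ≤ 4ε·(1 − q_r). -/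
open Finset

/-- **First-success distributions of ratio-close Bernoulli sequences are close.**
If `p` and `p'` are `ε`-ratio-close sequences of success probabilities with
`p_r = p'_r = 1`, and `q_i = p_i·∏_{j<i}(1−p_j)` (resp. `q'_i`) is the probability
that the first success occurs at trial `i`, then
`Σ_{i=1}^{r−1} |q_i − q'_i| ≤ 4ε(1 − q_r)`. -/
theorem first_success_distributions_close
    (r : ℕ) (hr : 1 ≤ r) (p p' : ℕ → ℝ) (ε : ℝ) (hε : 0 ≤ ε)
    (hp : ∀ i ∈ Finset.Icc 1 r, p i ∈ Set.Icc (0 : ℝ) 1)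
    (hp' : ∀ i ∈ Finset.Icc 1 r, p' i ∈ Set.Icc (0 : ℝ) 1)
    (hpr : p r = 1) (hp'r : p' r = 1)
    (hclose : ∀ i ∈ Finset.Icc 1 r,
      p i ≤ (1 + ε) * p' i ∧ p' i ≤ (1 + ε) * p i ∧
      1 - p i ≤ (1 + ε) * (1 - p' i) ∧ 1 - p' i ≤ (1 + ε) * (1 - p i)) :
    ∑ i ∈ Finset.Icc 1 (r - 1),
        |p i * ∏ j ∈ Finset.Icc 1 (i - 1), (1 - p j)
          - p' i * ∏ j ∈ Finset.Icc 1 (i - 1), (1 - p' j)|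
      ≤ 4 * ε * (1 - p r * ∏ j ∈ Finset.Icc 1 (r - 1), (1 - p j)) := by
  -- key invariant by induction
  have key : ∀ m, m ≤ r - 1 →
      (∑ i ∈ Finset.Icc 1 m,
        |p i * ∏ j ∈ Finset.Icc 1 (i - 1), (1 - p j)
          - p' i * ∏ j ∈ Finset.Icc 1 (i - 1), (1 - p' j)|)
      + |(∏ j ∈ Finset.Icc 1 m, (1 - p j)) - ∏ j ∈ Finset.Icc 1 m, (1 - p' j)|
      ≤ 2 * ε * (1 - ∏ j ∈ Finset.Icc 1 m, (1 - p j)) := by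
    intro m
    induction m with
    | zero => intro _; simp
    | succ m ih =>
      intro hm
      have hm' : m ≤ r - 1 := Nat.le_of_succ_le hm
      have hmem : m + 1 ∈ Finset.Icc 1 r :=
        Finset.mem_Icc.mpr ⟨Nat.succ_le_succ (Nat.zero_le m), le_trans hm (Nat.sub_le r 1)⟩
      set T : ℝ := ∏ j ∈ Finset.Icc 1 m, (1 - p j) with hT
      set T' : ℝ := ∏ j ∈ Finset.Icc 1 m, (1 - p' j) with hT'
      set a : ℝ := p (m + 1) with ha
      set b : ℝ := p' (m + 1) with hb
      have ha0 : 0 ≤ a := (hp _ hmem).1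
      have ha1 : a ≤ 1 := (hp _ hmem).2
      have hb0 : 0 ≤ b := (hp' _ hmem).1
      have hb1 : b ≤ 1 := (hp' _ hmem).2
      have hT0 : 0 ≤ T := by
        apply Finset.prod_nonneg
        intro j hj
        have hj' : j ∈ Finset.Icc 1 r := by
          rw [Finset.mem_Icc] at hj ⊢
          exact ⟨hj.1, le_trans hj.2 (le_trans hm' (Nat.sub_le r 1))⟩
        have := (hp _ hj').2
        linarith
      -- |a - b| ≤ ε * a
      have hab : |a - b| ≤ ε * a := by
        have h1 := (hclose _ hmem).1
        have h2 := (hclose _ hmem).2.1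
        rw [abs_sub_le_iff]
        constructor
        · rcases le_total b a with h | h
          · nlinarith
          · nlinarith
        · nlinarith
      -- rewrite sums and products over Icc 1 (m+1)
      have hsum : ∀ f : ℕ → ℝ, ∑ i ∈ Finset.Icc 1 (m + 1), f i
          = (∑ i ∈ Finset.Icc 1 m, f i) + f (m + 1) := fun f =>
        Finset.sum_Icc_succ_top (Nat.succ_le_succ (Nat.zero_le m)) f
      have hprod : ∀ f : ℕ → ℝ, ∏ j ∈ Finset.Icc 1 (m + 1), f j
          = (∏ j ∈ Finset.Icc 1 m, f j) * f (m + 1) := fun f =>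
        Finset.prod_Icc_succ_top (Nat.succ_le_succ (Nat.zero_le m)) f
      rw [hsum, hprod, hprod]
      have hidx : m + 1 - 1 = m := Nat.succ_sub_one m
      rw [hidx]
      -- bound the new summand
      have h1 : |a * T - b * T'| ≤ ε * a * T + b * |T - T'| := by
        have heq : a * T - b * T' = (a - b) * T + b * (T - T') := by ring
        rw [heq]
        refine (abs_add_le _ _).trans ?_
        rw [abs_mul, abs_mul, abs_of_nonneg hT0, abs_of_nonneg hb0]
        nlinarith [abs_nonneg (T - T')]
      -- bound the new difference-of-products term
      have h2 : |T * (1 - a) - T' * (1 - b)| ≤ (1 - b) * |T - T'| + ε * a * T := by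
        have heq : T * (1 - a) - T' * (1 - b) = (1 - b) * (T - T') + (b - a) * T := by ring
        rw [heq]
        refine (abs_add_le _ _).trans ?_
        rw [abs_mul, abs_mul, abs_of_nonneg hT0, abs_of_nonneg (by linarith : (0:ℝ) ≤ 1 - b)]
        have : |b - a| = |a - b| := abs_sub_comm b a
        nlinarith [abs_nonneg (T - T')]
      have := ih hm'
      rw [← hT, ← hT', ← ha, ← hb]
      nlinarith [abs_nonneg (T - T')]
  have hkey := key (r - 1) le_rfl
  have hT1 : (∏ j ∈ Finset.Icc 1 (r - 1), (1 - p j)) ≤ 1 := by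
    apply Finset.prod_le_one
    · intro j hj
      have hj' : j ∈ Finset.Icc 1 r := by
        rw [Finset.mem_Icc] at hj ⊢
        exact ⟨hj.1, le_trans hj.2 (Nat.sub_le r 1)⟩
      have := (hp _ hj').2
      linarith
    · intro j hj
      have hj' : j ∈ Finset.Icc 1 r := by
        rw [Finset.mem_Icc] at hj ⊢
        exact ⟨hj.1, le_trans hj.2 (Nat.sub_le r 1)⟩
      have := (hp _ hj').1
      linarith
  rw [hpr, one_mul]
  nlinarith [abs_nonneg ((∏ j ∈ Finset.Icc 1 (r - 1), (1 - p j))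
    - ∏ j ∈ Finset.Icc 1 (r - 1), (1 - p' j))]
end

section
/- Let r ≥ 1 and let p₁,…,p_r ∈ [0,1] with p_r = 1, and define q_i := p_i·∏_{j<i}(1−p_j). Then Σ_{i=1}^{r} q_i·( Σ_{j=1}^{i} p_j ) = 1. More generally, for arbitrary p_r ∈ [0,1], Σ_{i=1}^{r} q_i·( Σ_{j=1}^{i} p_j ) = 1 − ( ∏_{i=1}^{r} (1−p_i) )·( 1 + Σ_{i=1}^{r} p_i ). -/
open Finset

lemma first_success_aux (p : ℕ → ℝ) (r : ℕ) :
    ∑ i ∈ Finset.Icc 1 r,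
        (p i * ∏ j ∈ Finset.Icc 1 (i - 1), (1 - p j)) * (∑ j ∈ Finset.Icc 1 i, p j)
      = 1 - (∏ i ∈ Finset.Icc 1 r, (1 - p i)) * (1 + ∑ i ∈ Finset.Icc 1 r, p i) := by
  induction r with
  | zero => simp
  | succ n ih =>
      rw [Finset.sum_Icc_succ_top (by omega), ih, Finset.prod_Icc_succ_top (by omega),
        Finset.sum_Icc_succ_top (Nat.le_add_left 1 n)]
      simp only [Nat.add_sub_cancel]
      ring

/-- **A first-success identity for Bernoulli trials.**
With `q_i = p_i·∏_{j<i}(1−p_j)`, one has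
`Σ_{i=1}^r q_i (Σ_{j=1}^i p_j) = 1 − (∏_{i=1}^r (1−p_i))(1 + Σ_{i=1}^r p_i)`
for arbitrary `p_r ∈ [0,1]`; in particular the sum equals `1` when `p_r = 1`. -/
theorem first_success_weighted_sum
    (r : ℕ) (hr : 1 ≤ r) (p : ℕ → ℝ)
    (hp : ∀ i ∈ Finset.Icc 1 r, p i ∈ Set.Icc (0 : ℝ) 1) :
    (p r = 1 →
      ∑ i ∈ Finset.Icc 1 r,
        (p i * ∏ j ∈ Finset.Icc 1 (i - 1), (1 - p j)) * (∑ j ∈ Finset.Icc 1 i, p j)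
        = 1) ∧
    ∑ i ∈ Finset.Icc 1 r,
        (p i * ∏ j ∈ Finset.Icc 1 (i - 1), (1 - p j)) * (∑ j ∈ Finset.Icc 1 i, p j)
      = 1 - (∏ i ∈ Finset.Icc 1 r, (1 - p i)) * (1 + ∑ i ∈ Finset.Icc 1 r, p i) := by
  refine ⟨fun hpr => ?_, first_success_aux p r⟩
  rw [first_success_aux p r]
  have : (∏ i ∈ Finset.Icc 1 r, (1 - p i)) = 0 :=
    Finset.prod_eq_zero (Finset.mem_Icc.mpr ⟨hr, le_refl r⟩) (by rw [hpr]; ring)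
  rw [this]; ring
end

section
/- Let r ≥ 1, let p₁,…,p_r and p'₁,…,p'_r be sequences in [0,1] with p_r = p'_r = 1, and let ε ≥ 0 be such that the two sequences are ε-ratio-close. Then for every i ∈ {1,…,r}: | ∏_{j≤i}(1−p'_j) − ∏_{j≤i}(1−p_j) | ≤ 3ε·( ∏_{j≤i}(1−min(p_j,p'_j)) )·( Σ_{j≤i} min(p_j,p'_j) ). -/
open Finset

/-- Per-index bound: ratio-closeness gives `|p' - p| ≤ 3 ε m (1 - m)` with `m = min p p'`. -/
lemma ratio_close_key (a b ε : ℝ) (hε : 0 ≤ ε)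
    (ha : a ∈ Set.Icc (0 : ℝ) 1) (hb : b ∈ Set.Icc (0 : ℝ) 1)
    (h1 : a ≤ (1 + ε) * b) (h2 : b ≤ (1 + ε) * a)
    (h3 : 1 - a ≤ (1 + ε) * (1 - b)) (h4 : 1 - b ≤ (1 + ε) * (1 - a)) :
    |(1 - b) - (1 - a)| ≤ 3 * ε * min a b * (1 - min a b) := by
  obtain ⟨ha0, ha1⟩ := ha
  obtain ⟨hb0, hb1⟩ := hb
  have hd1 : |(1 - b) - (1 - a)| ≤ ε * min a b := by
    rcases le_total a b with h | h
    · rw [min_eq_left h, abs_le]; constructor <;> nlinarith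
    · rw [min_eq_right h, abs_le]; constructor <;> nlinarith
  have hd2 : |(1 - b) - (1 - a)| ≤ ε * (1 - min a b) := by
    rcases le_total a b with h | h
    · rw [min_eq_left h, abs_le]; constructor <;> nlinarith
    · rw [min_eq_right h, abs_le]; constructor <;> nlinarith
  have hm0 : 0 ≤ min a b := le_min ha0 hb0
  have hm1 : min a b ≤ 1 := le_trans (min_le_left _ _) ha1
  rcases le_total (min a b) (1/2) with h | h
  · nlinarith
  · nlinarith

/-- **Products of ratio-close Bernoulli sequences are close.**
If `p` and `p'` are `ε`-ratio-close sequences in `[0,1]` with `p_r = p'_r = 1`, then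
for every `i ∈ {1,…,r}`,
`|∏_{j≤i}(1−p'_j) − ∏_{j≤i}(1−p_j)| ≤ 3ε (∏_{j≤i}(1−min(p_j,p'_j))) (Σ_{j≤i} min(p_j,p'_j))`. -/
theorem survival_products_close
    (r : ℕ) (hr : 1 ≤ r) (p p' : ℕ → ℝ) (ε : ℝ) (hε : 0 ≤ ε)
    (hp : ∀ i ∈ Finset.Icc 1 r, p i ∈ Set.Icc (0 : ℝ) 1)
    (hp' : ∀ i ∈ Finset.Icc 1 r, p' i ∈ Set.Icc (0 : ℝ) 1)
    (hpr : p r = 1) (hp'r : p' r = 1)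
    (hclose : ∀ i ∈ Finset.Icc 1 r,
      p i ≤ (1 + ε) * p' i ∧ p' i ≤ (1 + ε) * p i ∧
      1 - p i ≤ (1 + ε) * (1 - p' i) ∧ 1 - p' i ≤ (1 + ε) * (1 - p i)) :
    ∀ i ∈ Finset.Icc 1 r,
      |(∏ j ∈ Finset.Icc 1 i, (1 - p' j)) - ∏ j ∈ Finset.Icc 1 i, (1 - p j)|
        ≤ 3 * ε * (∏ j ∈ Finset.Icc 1 i, (1 - min (p j) (p' j)))
            * (∑ j ∈ Finset.Icc 1 i, min (p j) (p' j)) := by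
  have main : ∀ i, i ≤ r →
      |(∏ j ∈ Finset.Icc 1 i, (1 - p' j)) - ∏ j ∈ Finset.Icc 1 i, (1 - p j)|
        ≤ 3 * ε * (∏ j ∈ Finset.Icc 1 i, (1 - min (p j) (p' j)))
            * (∑ j ∈ Finset.Icc 1 i, min (p j) (p' j)) := by
    intro i
    induction i with
    | zero => intro _; simp
    | succ n ih =>
      intro hn
      have hnr : n ≤ r := le_trans (Nat.le_succ n) hn
      have hmem : n + 1 ∈ Finset.Icc 1 r := Finset.mem_Icc.mpr ⟨Nat.succ_le_succ (Nat.zero_le n), hn⟩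
      obtain ⟨c1, c2, c3, c4⟩ := hclose (n + 1) hmem
      have hpn := hp (n + 1) hmem
      have hp'n := hp' (n + 1) hmem
      have key := ratio_close_key (p (n+1)) (p' (n+1)) ε hε hpn hp'n c1 c2 c3 c4
      rw [Finset.prod_Icc_succ_top (Nat.succ_le_succ (Nat.zero_le n)),
          Finset.prod_Icc_succ_top (Nat.succ_le_succ (Nat.zero_le n)),
          Finset.prod_Icc_succ_top (Nat.succ_le_succ (Nat.zero_le n)),
          Finset.sum_Icc_succ_top (Nat.succ_le_succ (Nat.zero_le n))]
      set A := ∏ j ∈ Finset.Icc 1 n, (1 - p' j) with hA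
      set B := ∏ j ∈ Finset.Icc 1 n, (1 - p j) with hB
      set C := ∏ j ∈ Finset.Icc 1 n, (1 - min (p j) (p' j)) with hC
      set S := ∑ j ∈ Finset.Icc 1 n, min (p j) (p' j) with hS
      have hsub : ∀ j ∈ Finset.Icc 1 n, j ∈ Finset.Icc 1 r := by
        intro j hj
        rw [Finset.mem_Icc] at hj ⊢
        exact ⟨hj.1, le_trans hj.2 hnr⟩
      have hB0 : 0 ≤ B := Finset.prod_nonneg fun j hj => by
        have := (hp j (hsub j hj)).2; linarith
      have hBC : B ≤ C := by
        apply Finset.prod_le_prod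
        · intro j hj; have := (hp j (hsub j hj)).2; linarith
        · intro j hj
          have : min (p j) (p' j) ≤ p j := min_le_left _ _
          linarith
      have hC0 : 0 ≤ C := le_trans hB0 hBC
      have hS0 : 0 ≤ S := Finset.sum_nonneg fun j hj => le_min (hp j (hsub j hj)).1 (hp' j (hsub j hj)).1
      have ihn := ih hnr
      -- bounds on the last factors
      have hm0 : 0 ≤ min (p (n+1)) (p' (n+1)) := le_min hpn.1 hp'n.1
      have hq'0 : 0 ≤ 1 - p' (n+1) := by have := hp'n.2; linarith
      have hq'M : 1 - p' (n+1) ≤ 1 - min (p (n+1)) (p' (n+1)) := by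
        have : min (p (n+1)) (p' (n+1)) ≤ p' (n+1) := min_le_right _ _
        linarith
      have hM0 : 0 ≤ 1 - min (p (n+1)) (p' (n+1)) := le_trans hq'0 hq'M
      have h1 : |A * (1 - p' (n+1)) - B * (1 - p (n+1))| ≤
          |A - B| * (1 - min (p (n+1)) (p' (n+1))) + B * |(1 - p' (n+1)) - (1 - p (n+1))| := by
        have : A * (1 - p' (n+1)) - B * (1 - p (n+1))
            = (A - B) * (1 - p' (n+1)) + B * ((1 - p' (n+1)) - (1 - p (n+1))) := by ring
        rw [this]
        refine le_trans (abs_add_le _ _) ?_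
        rw [abs_mul, abs_mul, abs_of_nonneg hB0]
        gcongr
        rw [abs_of_nonneg hq'0]
        exact hq'M
      refine le_trans h1 ?_
      have h2 : |A - B| * (1 - min (p (n+1)) (p' (n+1))) ≤
          3 * ε * C * S * (1 - min (p (n+1)) (p' (n+1))) := by gcongr
      have h3 : B * |(1 - p' (n+1)) - (1 - p (n+1))| ≤
          C * (3 * ε * min (p (n+1)) (p' (n+1)) * (1 - min (p (n+1)) (p' (n+1)))) := by
        apply mul_le_mul hBC key (abs_nonneg _) hC0
      nlinarith [mul_nonneg (mul_nonneg (mul_nonneg (by linarith : (0:ℝ) ≤ 3 * ε) hC0) hM0) hS0]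
  intro i hi
  exact main i (Finset.mem_Icc.mp hi).2
end

section
/- Let r ≥ 1, let p₁,…,p_r and p'₁,…,p'_r be sequences in [0,1] with p_r = p'_r = 1, define q_i := p_i·∏_{j<i}(1−p_j) and q'_i := p'_i·∏_{j<i}(1−p'_j), and let ε ≥ 0 be such that the two sequences are ε-ratio-close. Then for every i ∈ {1,…,r}: | q_i − q'_i | ≤ 3ε·min(p_i,p'_i)·( ∏_{j<i}(1−min(p_j,p'_j)) )·( 1/3 + Σ_{j≤i} min(p_j,p'_j) ). -/
open Finset

lemma abs_prod_sub_prod_le (s : Finset ℕ) (a b c : ℕ → ℝ)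
    (h : ∀ j ∈ s, 0 ≤ a j ∧ a j ≤ c j ∧ 0 ≤ b j ∧ b j ≤ c j) :
    |∏ j ∈ s, a j - ∏ j ∈ s, b j| ≤ ∑ j ∈ s, |a j - b j| * ∏ k ∈ s.erase j, c k := by
  induction s using Finset.induction_on with
  | empty => simp
  | @insert x t hx ih =>
    have hx' := h x (mem_insert_self x t)
    have ht : ∀ j ∈ t, 0 ≤ a j ∧ a j ≤ c j ∧ 0 ≤ b j ∧ b j ≤ c j :=
      fun j hj => h j (mem_insert_of_mem hj)
    have hA0 : 0 ≤ ∏ j ∈ t, a j := prod_nonneg fun j hj => (ht j hj).1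
    have hB0 : 0 ≤ ∏ j ∈ t, b j := prod_nonneg fun j hj => (ht j hj).2.2.1
    have hAC : ∏ j ∈ t, a j ≤ ∏ j ∈ t, c j :=
      prod_le_prod (fun j hj => (ht j hj).1) (fun j hj => (ht j hj).2.1)
    have hcx : 0 ≤ c x := le_trans hx'.1 hx'.2.1
    rw [prod_insert hx, prod_insert hx, sum_insert hx, erase_insert hx]
    have key : |a x * ∏ j ∈ t, a j - b x * ∏ j ∈ t, b j|
        ≤ |a x - b x| * ∏ j ∈ t, c j + c x * |∏ j ∈ t, a j - ∏ j ∈ t, b j| := by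
      have h1 : a x * ∏ j ∈ t, a j - b x * ∏ j ∈ t, b j
          = (a x - b x) * ∏ j ∈ t, a j + b x * (∏ j ∈ t, a j - ∏ j ∈ t, b j) := by ring
      rw [h1]
      refine (abs_add_le _ _).trans ?_
      rw [abs_mul, abs_mul, abs_of_nonneg hA0, abs_of_nonneg hx'.2.2.1]
      gcongr
      exact hx'.2.2.2
    refine key.trans ?_
    have h2 : c x * |∏ j ∈ t, a j - ∏ j ∈ t, b j|
        ≤ c x * ∑ j ∈ t, |a j - b j| * ∏ k ∈ t.erase j, c k :=
      mul_le_mul_of_nonneg_left (ih ht) hcx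
    have h3 : c x * ∑ j ∈ t, |a j - b j| * ∏ k ∈ t.erase j, c k
        = ∑ j ∈ t, |a j - b j| * ∏ k ∈ (insert x t).erase j, c k := by
      rw [Finset.mul_sum]
      refine Finset.sum_congr rfl fun j hj => ?_
      have hne : j ≠ x := fun hh => hx (hh ▸ hj)
      rw [Finset.erase_insert_of_ne (Ne.symm hne),
        Finset.prod_insert (fun hmem => hx (Finset.mem_of_mem_erase hmem))]
      ring
    linarith

lemma abs_mul_sub_mul (u u' A B P : ℝ) (hu : 0 ≤ u) (hu' : 0 ≤ u')
    (hA : 0 ≤ A) (hB : 0 ≤ B) (hAP : A ≤ P) (hBP : B ≤ P) :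
    |u * A - u' * B| ≤ |u - u'| * P + min u u' * |A - B| := by
  rcases le_total u u' with h | h
  · rw [min_eq_left h]
    have h1 : u * A - u' * B = u * (A - B) + (u - u') * B := by ring
    rw [h1]
    refine (abs_add_le _ _).trans ?_
    rw [abs_mul, abs_mul, abs_of_nonneg hu, abs_of_nonneg hB]
    have h2 : |u - u'| * B ≤ |u - u'| * P := mul_le_mul_of_nonneg_left hBP (abs_nonneg _)
    linarith
  · rw [min_eq_right h]
    have h1 : u * A - u' * B = u' * (A - B) + (u - u') * A := by ring
    rw [h1]
    refine (abs_add_le _ _).trans ?_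
    rw [abs_mul, abs_mul, abs_of_nonneg hu', abs_of_nonneg hA]
    have h2 : |u - u'| * A ≤ |u - u'| * P := mul_le_mul_of_nonneg_left hAP (abs_nonneg _)
    linarith

set_option maxHeartbeats 1600000 in
/-- **First-success probabilities of ratio-close Bernoulli sequences are pointwise
close.** If `p` and `p'` are `ε`-ratio-close sequences in `[0,1]` with
`p_r = p'_r = 1`, and `q_i = p_i·∏_{j<i}(1−p_j)` (resp. `q'_i`), then for every
`i ∈ {1,…,r}`:
`|q_i − q'_i| ≤ 3ε min(p_i,p'_i) (∏_{j<i}(1−min(p_j,p'_j))) (1/3 + Σ_{j≤i} min(p_j,p'_j))`. -/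
theorem first_success_probabilities_pointwise_close
    (r : ℕ) (hr : 1 ≤ r) (p p' : ℕ → ℝ) (ε : ℝ) (hε : 0 ≤ ε)
    (hp : ∀ i ∈ Finset.Icc 1 r, p i ∈ Set.Icc (0 : ℝ) 1)
    (hp' : ∀ i ∈ Finset.Icc 1 r, p' i ∈ Set.Icc (0 : ℝ) 1)
    (hpr : p r = 1) (hp'r : p' r = 1)
    (hclose : ∀ i ∈ Finset.Icc 1 r,
      p i ≤ (1 + ε) * p' i ∧ p' i ≤ (1 + ε) * p i ∧
      1 - p i ≤ (1 + ε) * (1 - p' i) ∧ 1 - p' i ≤ (1 + ε) * (1 - p i)) :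
    ∀ i ∈ Finset.Icc 1 r,
      |p i * (∏ j ∈ Finset.Icc 1 (i - 1), (1 - p j))
          - p' i * ∏ j ∈ Finset.Icc 1 (i - 1), (1 - p' j)|
        ≤ 3 * ε * min (p i) (p' i)
            * (∏ j ∈ Finset.Icc 1 (i - 1), (1 - min (p j) (p' j)))
            * (1 / 3 + ∑ j ∈ Finset.Icc 1 i, min (p j) (p' j)) := by
  intro i hi
  rw [Finset.mem_Icc] at hi
  obtain ⟨hi1, hir⟩ := hi
  set m : ℕ → ℝ := fun j => min (p j) (p' j) with hm
  have hsub : Finset.Icc 1 (i - 1) ⊆ Finset.Icc 1 r :=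
    Finset.Icc_subset_Icc le_rfl (le_trans (Nat.sub_le i 1) hir)
  have hsubi : Finset.Icc 1 i ⊆ Finset.Icc 1 r := Finset.Icc_subset_Icc le_rfl hir
  have hm0 : ∀ j ∈ Finset.Icc 1 r, 0 ≤ m j := by
    intro j hj
    exact le_min (hp j hj).1 (hp' j hj).1
  have hb : ∀ j ∈ Finset.Icc 1 r,
      0 ≤ 1 - p j ∧ 1 - p j ≤ 1 - m j ∧ 0 ≤ 1 - p' j ∧ 1 - p' j ≤ 1 - m j := by
    intro j hj
    obtain ⟨h0, h1⟩ := hp j hj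
    obtain ⟨h0', h1'⟩ := hp' j hj
    exact ⟨by linarith, sub_le_sub_left (min_le_left _ _) 1, by linarith,
      sub_le_sub_left (min_le_right _ _) 1⟩
  have hΔ : ∀ j ∈ Finset.Icc 1 r,
      |(1 - p j) - (1 - p' j)| ≤ 2 * ε * m j * (1 - m j) := by
    intro j hj
    obtain ⟨h0, h1⟩ := hp j hj
    obtain ⟨h0', h1'⟩ := hp' j hj
    obtain ⟨c1, c2, c3, c4⟩ := hclose j hj
    simp only [hm]
    rcases le_total (p j) (p' j) with h | h
    · rw [min_eq_left h, abs_sub_le_iff]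
      constructor
      · nlinarith [mul_nonneg (by linarith : (0:ℝ) ≤ 1 - p j)
          (by linarith : (0:ℝ) ≤ (1 + ε) * p j - p' j),
          mul_nonneg h0 (by linarith : (0:ℝ) ≤ (1 + ε) * (1 - p' j) - (1 - p j)),
          mul_nonneg (mul_nonneg hε h0) (by linarith : (0:ℝ) ≤ p' j - p j)]
      · nlinarith [mul_nonneg (mul_nonneg hε h0) (by linarith : (0:ℝ) ≤ 1 - p j)]
    · rw [min_eq_right h, abs_sub_le_iff]
      constructor
      · nlinarith [mul_nonneg (mul_nonneg hε h0') (by linarith : (0:ℝ) ≤ 1 - p' j)]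
      · nlinarith [mul_nonneg (by linarith : (0:ℝ) ≤ 1 - p' j)
          (by linarith : (0:ℝ) ≤ (1 + ε) * p' j - p j),
          mul_nonneg h0' (by linarith : (0:ℝ) ≤ (1 + ε) * (1 - p j) - (1 - p' j)),
          mul_nonneg (mul_nonneg hε h0') (by linarith : (0:ℝ) ≤ p j - p' j)]
  set s := Finset.Icc 1 (i - 1) with hs
  have hbs : ∀ j ∈ s, 0 ≤ 1 - p j ∧ 1 - p j ≤ 1 - m j ∧ 0 ≤ 1 - p' j ∧ 1 - p' j ≤ 1 - m j :=
    fun j hj => hb j (hsub hj)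
  have hP0 : 0 ≤ ∏ j ∈ s, (1 - m j) :=
    prod_nonneg fun j hj => le_trans (hbs j hj).1 (hbs j hj).2.1
  have key := abs_prod_sub_prod_le s (fun j => 1 - p j) (fun j => 1 - p' j)
    (fun j => 1 - m j) hbs
  have hsum : ∑ j ∈ s, |(1 - p j) - (1 - p' j)| * ∏ k ∈ s.erase j, (1 - m k)
      ≤ ∑ j ∈ s, 2 * ε * m j * ∏ k ∈ s, (1 - m k) := by
    refine Finset.sum_le_sum fun j hj => ?_
    have h1 := hΔ j (hsub hj)
    have h2 : (1 - m j) * ∏ k ∈ s.erase j, (1 - m k) = ∏ k ∈ s, (1 - m k) :=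
      Finset.mul_prod_erase s (fun k => 1 - m k) hj
    have h3 : 0 ≤ ∏ k ∈ s.erase j, (1 - m k) := prod_nonneg fun k hk =>
      le_trans (hbs k (Finset.mem_of_mem_erase hk)).1 (hbs k (Finset.mem_of_mem_erase hk)).2.1
    calc |(1 - p j) - (1 - p' j)| * ∏ k ∈ s.erase j, (1 - m k)
        ≤ (2 * ε * m j * (1 - m j)) * ∏ k ∈ s.erase j, (1 - m k) :=
          mul_le_mul_of_nonneg_right h1 h3
      _ = 2 * ε * m j * ((1 - m j) * ∏ k ∈ s.erase j, (1 - m k)) := by ring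
      _ = 2 * ε * m j * ∏ k ∈ s, (1 - m k) := by rw [h2]
  have hsum2 : ∑ j ∈ s, 2 * ε * m j * ∏ k ∈ s, (1 - m k)
      = 2 * ε * (∑ j ∈ s, m j) * ∏ k ∈ s, (1 - m k) := by
    rw [← Finset.sum_mul, Finset.mul_sum]
  have hprodAB : |(∏ j ∈ s, (1 - p j)) - ∏ j ∈ s, (1 - p' j)|
      ≤ 2 * ε * (∑ j ∈ s, m j) * ∏ k ∈ s, (1 - m k) := by
    calc |(∏ j ∈ s, (1 - p j)) - ∏ j ∈ s, (1 - p' j)|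
        ≤ ∑ j ∈ s, |(1 - p j) - (1 - p' j)| * ∏ k ∈ s.erase j, (1 - m k) := key
      _ ≤ ∑ j ∈ s, 2 * ε * m j * ∏ k ∈ s, (1 - m k) := hsum
      _ = 2 * ε * (∑ j ∈ s, m j) * ∏ k ∈ s, (1 - m k) := hsum2
  have hii : i ∈ Finset.Icc 1 r := Finset.mem_Icc.2 ⟨hi1, hir⟩
  obtain ⟨hpi0, hpi1⟩ := hp i hii
  obtain ⟨hpi0', hpi1'⟩ := hp' i hii
  obtain ⟨c1, c2, _, _⟩ := hclose i hii
  have hmi0 : 0 ≤ m i := le_min hpi0 hpi0'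
  have hpp' : |p i - p' i| ≤ ε * m i := by
    simp only [hm]
    rcases le_total (p i) (p' i) with h | h
    · rw [min_eq_left h, abs_sub_le_iff]
      exact ⟨by nlinarith [mul_nonneg hε hpi0], by nlinarith [c2]⟩
    · rw [min_eq_right h, abs_sub_le_iff]
      exact ⟨by nlinarith [c1], by nlinarith [mul_nonneg hε hpi0']⟩
  have hA : ∏ j ∈ s, (1 - p j) ≤ ∏ j ∈ s, (1 - m j) :=
    prod_le_prod (fun j hj => (hbs j hj).1) fun j hj => (hbs j hj).2.1
  have hB : ∏ j ∈ s, (1 - p' j) ≤ ∏ j ∈ s, (1 - m j) :=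
    prod_le_prod (fun j hj => (hbs j hj).2.2.1) fun j hj => (hbs j hj).2.2.2
  have hA0 : 0 ≤ ∏ j ∈ s, (1 - p j) := prod_nonneg fun j hj => (hbs j hj).1
  have hB0 : 0 ≤ ∏ j ∈ s, (1 - p' j) := prod_nonneg fun j hj => (hbs j hj).2.2.1
  have split := abs_mul_sub_mul (p i) (p' i) (∏ j ∈ s, (1 - p j)) (∏ j ∈ s, (1 - p' j))
    (∏ j ∈ s, (1 - m j)) hpi0 hpi0' hA0 hB0 hA hB
  have hS' : (0:ℝ) ≤ ∑ j ∈ s, m j := Finset.sum_nonneg fun j hj => hm0 j (hsub hj)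
  have hSle : ∑ j ∈ s, m j ≤ ∑ j ∈ Finset.Icc 1 i, m j :=
    Finset.sum_le_sum_of_subset_of_nonneg
      (Finset.Icc_subset_Icc le_rfl (Nat.sub_le i 1))
      (fun j hj _ => hm0 j (hsubi hj))
  have habs0 : 0 ≤ |(∏ j ∈ s, (1 - p j)) - ∏ j ∈ s, (1 - p' j)| := abs_nonneg _
  have hmulP : |p i - p' i| * ∏ j ∈ s, (1 - m j) ≤ (ε * m i) * ∏ j ∈ s, (1 - m j) :=
    mul_le_mul_of_nonneg_right hpp' hP0
  have hmulQ : m i * |(∏ j ∈ s, (1 - p j)) - ∏ j ∈ s, (1 - p' j)|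
      ≤ m i * (2 * ε * (∑ j ∈ s, m j) * ∏ k ∈ s, (1 - m k)) :=
    mul_le_mul_of_nonneg_left hprodAB hmi0
  have hεmP : 0 ≤ ε * m i * ∏ j ∈ s, (1 - m j) := mul_nonneg (mul_nonneg hε hmi0) hP0
  have hfin : 0 ≤ (ε * m i * ∏ j ∈ s, (1 - m j)) *
      (3 * (∑ j ∈ Finset.Icc 1 i, m j) - 2 * ∑ j ∈ s, m j) :=
    mul_nonneg hεmP (by linarith)
  calc |p i * ∏ j ∈ s, (1 - p j) - p' i * ∏ j ∈ s, (1 - p' j)|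
      ≤ |p i - p' i| * ∏ j ∈ s, (1 - m j)
        + m i * |(∏ j ∈ s, (1 - p j)) - ∏ j ∈ s, (1 - p' j)| := split
    _ ≤ (ε * m i) * ∏ j ∈ s, (1 - m j)
        + m i * (2 * ε * (∑ j ∈ s, m j) * ∏ k ∈ s, (1 - m k)) := by linarith
    _ ≤ 3 * ε * m i * (∏ j ∈ s, (1 - m j)) * (1 / 3 + ∑ j ∈ Finset.Icc 1 i, m j) := by
        nlinarith [hfin]
end

section
/- Let A be an integrable real-valued random variable, B a real-valued random variable, C a random variable with values in a measurable space, and δ > 0. If 𝔼[A | B, C] = B almost surely, then rnd_δ(B) ≤ 𝔼[A | rnd_δ(B), C] ≤ rnd_δ(B) + δ almost surely. -/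
open MeasureTheory

/-- **Conditioning on a rounded variable:** if `𝔼[A | B, C] = B` a.s., then
`rnd_δ(B) ≤ 𝔼[A | rnd_δ(B), C] ≤ rnd_δ(B) + δ` a.s., where
`rnd_δ(x) = δ·⌊x/δ⌋` is rounding down to the nearest multiple of `δ`. -/
theorem condexp_rounded
    {Ω γ : Type*} [MeasurableSpace Ω] [MeasurableSpace γ]
    (μ : Measure Ω) [IsProbabilityMeasure μ]
    (A : Ω → ℝ) (hA : Integrable A μ)
    (B : Ω → ℝ) (hB : Measurable B)
    (C : Ω → γ) (hC : Measurable C)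
    (δ : ℝ) (hδ : 0 < δ)
    (hcond : μ[A | MeasurableSpace.comap (fun ω => (B ω, C ω)) inferInstance]
      =ᵐ[μ] B) :
    ∀ᵐ ω ∂μ,
      δ * (⌊B ω / δ⌋ : ℝ)
          ≤ (μ[A | MeasurableSpace.comap
              (fun ω => (δ * (⌊B ω / δ⌋ : ℝ), C ω)) inferInstance]) ω ∧
        (μ[A | MeasurableSpace.comap
            (fun ω => (δ * (⌊B ω / δ⌋ : ℝ), C ω)) inferInstance]) ω
          ≤ δ * (⌊B ω / δ⌋ : ℝ) + δ := by
  set R : Ω → ℝ := fun ω => δ * (⌊B ω / δ⌋ : ℝ) with hRdef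
  -- pointwise bounds
  have hRle : ∀ ω, R ω ≤ B ω := by
    intro ω
    have := Int.floor_le (B ω / δ)
    calc R ω = δ * (⌊B ω / δ⌋ : ℝ) := rfl
      _ ≤ δ * (B ω / δ) := by nlinarith
      _ = B ω := by field_simp
  have hleR : ∀ ω, B ω ≤ R ω + δ := by
    intro ω
    have := Int.lt_floor_add_one (B ω / δ)
    have : B ω / δ * δ ≤ ((⌊B ω / δ⌋ : ℝ) + 1) * δ := by nlinarith
    have h2 : B ω = B ω / δ * δ := by field_simp
    calc B ω = B ω / δ * δ := h2
      _ ≤ ((⌊B ω / δ⌋ : ℝ) + 1) * δ := this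
      _ = R ω + δ := by ring
  have hRmeas : Measurable R :=
    measurable_const.mul (measurable_from_top.comp (hB.div_const δ).floor)
  -- σ-algebras
  set m1 : MeasurableSpace Ω :=
    MeasurableSpace.comap (fun ω => (B ω, C ω)) inferInstance with hm1def
  set m2 : MeasurableSpace Ω :=
    MeasurableSpace.comap (fun ω => (R ω, C ω)) inferInstance with hm2def
  have hm1 := (hB.prodMk hC).comap_le
  have hm2 := (hRmeas.prodMk hC).comap_le
  -- m2 ≤ m1
  have hg : Measurable (fun p : ℝ × γ => (δ * (⌊p.1 / δ⌋ : ℝ), p.2)) :=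
    (measurable_const.mul
      (measurable_from_top.comp (measurable_fst.div_const δ).floor)).prodMk
      measurable_snd
  have hm21 : m2 ≤ m1 := by
    rw [hm2def, hm1def]
    have : (fun ω => (R ω, C ω))
        = (fun p : ℝ × γ => (δ * (⌊p.1 / δ⌋ : ℝ), p.2)) ∘ (fun ω => (B ω, C ω)) := rfl
    rw [this, ← MeasurableSpace.comap_comp]
    exact MeasurableSpace.comap_mono hg.comap_le
  -- R is m2-measurable
  have hR2 : Measurable[m2] R :=
    (measurable_fst.comp (comap_measurable (fun ω => (R ω, C ω))))
  -- integrability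
  have hBint : Integrable B μ := (integrable_condExp).congr hcond
  have hRint : Integrable R μ := by
    refine (hBint.abs.add (integrable_const δ)).mono
      hRmeas.aestronglyMeasurable (Filter.Eventually.of_forall fun ω => ?_)
    have h1 := hRle ω
    have h2 := hleR ω
    simp only [Real.norm_eq_abs, Pi.add_apply]
    rw [abs_of_nonneg (by positivity : (0:ℝ) ≤ |B ω| + δ)]
    rcases abs_cases (B ω) with ⟨h, _⟩ | ⟨h, _⟩ <;>
      rcases abs_cases (R ω) with ⟨h', _⟩ | ⟨h', _⟩ <;> linarith
  -- tower property
  have htower : μ[A | m2] =ᵐ[μ] μ[B | m2] := by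
    have h1 : μ[μ[A | m1] | m2] =ᵐ[μ] μ[A | m2] := condExp_condExp_of_le hm21 hm1
    have h2 : μ[μ[A | m1] | m2] =ᵐ[μ] μ[B | m2] := condExp_congr_ae hcond
    exact h1.symm.trans h2
  -- lower bound
  have hlow : R ≤ᵐ[μ] μ[B | m2] := by
    have h1 : μ[R | m2] ≤ᵐ[μ] μ[B | m2] :=
      condExp_mono hRint hBint (Filter.Eventually.of_forall hRle)
    have h2 : μ[R | m2] = R :=
      condExp_of_stronglyMeasurable (μ := μ) hm2 hR2.stronglyMeasurable hRint
    rw [h2] at h1; exact h1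
  -- upper bound
  have hup : μ[B | m2] ≤ᵐ[μ] fun ω => R ω + δ := by
    have hRd2 : Measurable[m2] (fun ω => R ω + δ) := hR2.add measurable_const
    have hRdint : Integrable (fun ω => R ω + δ) μ := hRint.add (integrable_const δ)
    have h1 : μ[B | m2] ≤ᵐ[μ] μ[fun ω => R ω + δ | m2] :=
      condExp_mono hBint hRdint (Filter.Eventually.of_forall hleR)
    have h2 : μ[fun ω => R ω + δ | m2] = fun ω => R ω + δ :=
      condExp_of_stronglyMeasurable (μ := μ) hm2 hRd2.stronglyMeasurable hRdint
    rw [h2] at h1; exact h1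
  filter_upwards [htower, hlow, hup] with ω h1 h2 h3
  constructor
  · calc R ω ≤ (μ[B | m2]) ω := h2
      _ = (μ[A | m2]) ω := h1.symm
  · calc (μ[A | m2]) ω = (μ[B | m2]) ω := h1
      _ ≤ R ω + δ := h3
end

section
/- There exists r₀ ∈ ℕ such that the following holds for every integer r ≥ r₀. Let M be a random variable with 0 ≤ M ≤ 1 almost surely, and suppose that for every ρ of the form 1 + k/r with k ∈ {0, 1, …, r(r−1)} (i.e. ρ ∈ {1, 1+1/r, 1+2/r, …, r}) one has P[ M ≥ ρ/(256√r) ] ≤ 1/(2ρ·log r). Then 𝔼[M] ≤ 1/(128√r). -/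
open MeasureTheory ENNReal

/-- **From tail bounds at the grid `{1, 1+1/r, …, r}` to an expectation bound:**
there is `r₀` such that for all `r ≥ r₀`, any random variable `M` with values in
`[0,1]` satisfying `P[M ≥ ρ/(256√r)] ≤ 1/(2ρ log r)` for every
`ρ ∈ {1, 1+1/r, 1+2/r, …, r}` has `𝔼[M] ≤ 1/(128√r)`. -/
theorem expectation_from_grid_tail_bounds :
    ∃ r₀ : ℕ, ∀ r : ℕ, r₀ ≤ r →
      ∀ {Ω : Type} (_ : MeasurableSpace Ω) (μ : Measure Ω), IsProbabilityMeasure μ →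
      ∀ M : Ω → ℝ, Measurable M →
        (∀ᵐ ω ∂μ, M ω ∈ Set.Icc (0 : ℝ) 1) →
        (∀ k : ℕ, k ≤ r * (r - 1) →
          μ {ω | (1 + (k : ℝ) / r) / (256 * Real.sqrt r) ≤ M ω}
            ≤ ENNReal.ofReal (1 / (2 * (1 + (k : ℝ) / r) * Real.logb 2 r))) →
        ∫ ω, M ω ∂μ ≤ 1 / (128 * Real.sqrt r) := by
  refine ⟨65536, ?_⟩
  intro r hr Ω mΩ μ hμ M hMmeas hM01 htail
  have hr1 : 1 ≤ r := le_trans (by norm_num) hr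
  set R : ℝ := (r : ℝ) with hRdef
  have hR : (65536 : ℝ) ≤ R := by rw [hRdef]; exact_mod_cast hr
  have hRpos : (0 : ℝ) < R := by linarith
  set s : ℝ := Real.sqrt R with hsdef
  have hspos : (0 : ℝ) < s := Real.sqrt_pos.mpr hRpos
  have hsq : s * s = R := Real.mul_self_sqrt hRpos.le
  have hs256 : (256 : ℝ) ≤ s := by
    by_contra h
    push_neg at h
    nlinarith
  set K : ℕ := r * (r - 1) with hKdef
  have hKR : (K : ℝ) = R * R - R := by
    rw [hKdef]
    push_cast [Nat.cast_sub hr1]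
    ring
  set Δ : ℝ := 1 / (256 * R * s) with hΔdef
  have hΔpos : 0 < Δ := by positivity
  -- log facts
  have hlogR : 1 ≤ Real.log R := by
    rw [← Real.log_exp 1]
    apply Real.log_le_log (Real.exp_pos 1)
    have := Real.exp_one_lt_d9
    linarith
  have hlog2 : Real.log 2 < 1 := by
    have := Real.log_two_lt_d9
    linarith
  have hlog2pos : 0 < Real.log 2 := Real.log_pos one_lt_two
  have hL : Real.log R ≤ Real.logb 2 R := by
    rw [Real.logb, le_div_iff₀ hlog2pos]
    nlinarith
  have hLpos : 0 < Real.logb 2 R := lt_of_lt_of_le (by linarith) hL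
  -- grid value formula
  have hcval : ∀ k : ℕ, (1 + (k : ℝ) / R) / (256 * s) = 1 / (256 * s) + (k : ℝ) * Δ := by
    intro k
    rw [hΔdef]
    field_simp
  -- measurability of level sets
  have hmeasS : ∀ k : ℕ, MeasurableSet {ω | (1 + (k : ℝ) / R) / (256 * s) ≤ M ω} :=
    fun k => measurableSet_le measurable_const hMmeas
  have htop : (1 : ℝ) < (1 + ((K : ℝ) + 1) / R) / (256 * s) := by
    rw [lt_div_iff₀ (by positivity), hKR]
    have hq : (R * R - R + 1) / R = R - 1 + 1 / R := by field_simp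
    rw [hq]
    have h2 : (256 : ℝ) * s ≤ s * s := by nlinarith
    have h3 : (0 : ℝ) < 1 / R := by positivity
    linarith
  -- the dominating function
  set F : Ω → ℝ := fun ω => 1 / (256 * s) +
      ∑ k ∈ Finset.range (K + 1),
        Set.indicator {ω' | (1 + (k : ℝ) / R) / (256 * s) ≤ M ω'} (fun _ => Δ) ω with hFdef
  -- pointwise bound
  have hpt : ∀ᵐ ω ∂μ, M ω ≤ F ω := by
    filter_upwards [hM01] with ω hω
    have hex : ∃ k : ℕ, M ω < (1 + (k : ℝ) / R) / (256 * s) := by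
      refine ⟨K + 1, ?_⟩
      push_cast
      calc M ω ≤ 1 := hω.2
        _ < _ := htop
    set j := Nat.find hex with hjdef
    have hj : M ω < (1 + (j : ℝ) / R) / (256 * s) := Nat.find_spec hex
    have hjle : j ≤ K + 1 := by
      apply Nat.find_le
      push_cast
      calc M ω ≤ 1 := hω.2
        _ < _ := htop
    have hmem : ∀ k, k < j → (1 + (k : ℝ) / R) / (256 * s) ≤ M ω := by
      intro k hk
      exact not_lt.mp (Nat.find_min hex hk)
    have hsum : (j : ℝ) * Δ ≤
        ∑ k ∈ Finset.range (K + 1),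
          Set.indicator {ω' | (1 + (k : ℝ) / R) / (256 * s) ≤ M ω'} (fun _ => Δ) ω := by
      calc (j : ℝ) * Δ = ∑ _k ∈ Finset.range j, Δ := by
            rw [Finset.sum_const, Finset.card_range, nsmul_eq_mul]
        _ = ∑ k ∈ Finset.range j,
              Set.indicator {ω' | (1 + (k : ℝ) / R) / (256 * s) ≤ M ω'} (fun _ => Δ) ω := by
            refine Finset.sum_congr rfl fun k hk => ?_
            rw [Set.indicator_of_mem]
            exact hmem k (Finset.mem_range.mp hk)
        _ ≤ _ := by
            apply Finset.sum_le_sum_of_subset_of_nonneg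
            · exact Finset.range_subset_range.mpr hjle
            · intro k _ _
              exact Set.indicator_nonneg (fun _ _ => hΔpos.le) ω
    rw [hFdef]
    have := hcval j
    dsimp only
    linarith
  -- integrability
  have hIntM : Integrable M μ := by
    refine (integrable_const (1 : ℝ)).mono' hMmeas.aestronglyMeasurable ?_
    filter_upwards [hM01] with ω hω
    rw [Real.norm_eq_abs, abs_le]
    exact ⟨by linarith [hω.1], hω.2⟩
  have hIntF : Integrable F μ := by
    apply Integrable.add (integrable_const _)
    apply integrable_finset_sum
    intro k _
    exact (integrable_const Δ).indicator (hmeasS k)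
  have hle1 : ∫ ω, M ω ∂μ ≤ ∫ ω, F ω ∂μ := integral_mono_ae hIntM hIntF hpt
  -- compute ∫ F
  have hFeq : ∫ ω, F ω ∂μ = 1 / (256 * s) +
      ∑ k ∈ Finset.range (K + 1),
        (μ {ω | (1 + (k : ℝ) / R) / (256 * s) ≤ M ω}).toReal * Δ := by
    rw [hFdef]
    rw [integral_add (integrable_const _) (integrable_finset_sum _ fun k _ =>
      (integrable_const Δ).indicator (hmeasS k))]
    rw [integral_const]
    simp only [measure_univ, probReal_univ, ENNReal.toReal_one, one_smul]
    congr 1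
    rw [integral_finset_sum _ fun k _ => (integrable_const Δ).indicator (hmeasS k)]
    refine Finset.sum_congr rfl fun k _ => ?_
    rw [integral_indicator_const _ (hmeasS k), smul_eq_mul, measureReal_def]
  -- bound each term by the tail bound
  have hterm : ∀ k ∈ Finset.range (K + 1),
      (μ {ω | (1 + (k : ℝ) / R) / (256 * s) ≤ M ω}).toReal * Δ ≤
        (1 / (2 * (1 + (k : ℝ) / R) * Real.logb 2 R)) * Δ := by
    intro k hk
    have hk' : k ≤ K := Nat.lt_succ_iff.mp (Finset.mem_range.mp hk)
    have hkpos : (0 : ℝ) < 1 + (k : ℝ) / R := by positivity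
    have h1 : (μ {ω | (1 + (k : ℝ) / R) / (256 * s) ≤ M ω}).toReal ≤
        1 / (2 * (1 + (k : ℝ) / R) * Real.logb 2 R) := by
      apply ENNReal.toReal_le_of_le_ofReal (by positivity)
      exact htail k hk'
    exact mul_le_mul_of_nonneg_right h1 hΔpos.le
  -- the harmonic-sum bound
  have hH : ∑ k ∈ Finset.range (K + 1), 1 / (R + (k : ℝ)) ≤ 1 / R + Real.log R := by
    rw [Finset.sum_range_succ']
    have htel : ∑ k ∈ Finset.range K, 1 / (R + ((k : ℕ) + 1 : ℕ)) ≤ Real.log R := by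
      have hsub := Finset.sum_range_sub (fun k : ℕ => Real.log (R + (k : ℝ))) K
      have hstep : ∀ k ∈ Finset.range K, 1 / (R + ((k : ℕ) + 1 : ℕ)) ≤
          Real.log (R + ((k : ℝ) + 1)) - Real.log (R + (k : ℝ)) := by
        intro k _
        have hx : (0 : ℝ) < R + (k : ℝ) := by positivity
        have hx1 : (0 : ℝ) < R + (k : ℝ) + 1 := by positivity
        have hlog := Real.log_le_sub_one_of_pos (show (0 : ℝ) < (R + (k : ℝ)) / (R + (k : ℝ) + 1) by positivity)
        rw [Real.log_div hx.ne' hx1.ne'] at hlog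
        have heq : (R + (k : ℝ)) / (R + (k : ℝ) + 1) - 1 = -(1 / (R + (k : ℝ) + 1)) := by
          field_simp
          ring
        rw [heq] at hlog
        push_cast
        have : R + ((k : ℝ) + 1) = R + (k : ℝ) + 1 := by ring
        rw [this]
        linarith
      calc ∑ k ∈ Finset.range K, 1 / (R + ((k : ℕ) + 1 : ℕ))
          ≤ ∑ k ∈ Finset.range K, (Real.log (R + ((k : ℝ) + 1)) - Real.log (R + (k : ℝ))) := by
            refine Finset.sum_le_sum hstep
        _ = Real.log (R + (K : ℝ)) - Real.log (R + (0 : ℕ)) := by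
            rw [← hsub]
            refine Finset.sum_congr rfl fun k _ => ?_
            push_cast
            ring_nf
        _ ≤ Real.log R := by
            rw [hKR]
            have : R + (R * R - R) = R * R := by ring
            rw [this, Real.log_mul hRpos.ne' hRpos.ne']
            simp [Real.log_nonneg (by linarith : (1:ℝ) ≤ R)]
    have h0 : 1 / (R + ((0 : ℕ) : ℝ)) = 1 / R := by norm_num
    push_cast at htel ⊢
    linarith
  -- bound the sum
  have hsumbound : ∑ k ∈ Finset.range (K + 1),
      (1 / (2 * (1 + (k : ℝ) / R) * Real.logb 2 R)) * Δ ≤ 1 / (256 * s) := by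
    have heach : ∀ k ∈ Finset.range (K + 1),
        (1 / (2 * (1 + (k : ℝ) / R) * Real.logb 2 R)) * Δ =
          (R * Δ / (2 * Real.logb 2 R)) * (1 / (R + (k : ℝ))) := by
      intro k _
      have hk1 : (0 : ℝ) < R + (k : ℝ) := by positivity
      field_simp
    rw [Finset.sum_congr rfl heach, ← Finset.mul_sum]
    have hc : R * Δ / (2 * Real.logb 2 R) ≥ 0 := by positivity
    calc (R * Δ / (2 * Real.logb 2 R)) * ∑ k ∈ Finset.range (K + 1), 1 / (R + (k : ℝ))
        ≤ (R * Δ / (2 * Real.logb 2 R)) * (1 / R + Real.log R) := by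
          exact mul_le_mul_of_nonneg_left hH hc
      _ ≤ (R * Δ / (2 * Real.logb 2 R)) * (2 * Real.logb 2 R) := by
          apply mul_le_mul_of_nonneg_left _ hc
          have h1R : 1 / R ≤ 1 := by
            rw [div_le_one hRpos]; linarith
          linarith
      _ = R * Δ := by field_simp
      _ = 1 / (256 * s) := by
          rw [hΔdef]; field_simp
  -- put it all together
  have hgoal : ∫ ω, M ω ∂μ ≤ 1 / (256 * s) + 1 / (256 * s) := by
    calc ∫ ω, M ω ∂μ ≤ ∫ ω, F ω ∂μ := hle1
      _ = _ := hFeq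
      _ ≤ 1 / (256 * s) + ∑ k ∈ Finset.range (K + 1),
            (1 / (2 * (1 + (k : ℝ) / R) * Real.logb 2 R)) * Δ := by
          exact add_le_add_right (Finset.sum_le_sum hterm) _
      _ ≤ _ := add_le_add_right hsumbound _
  calc ∫ ω, M ω ∂μ ≤ 1 / (256 * s) + 1 / (256 * s) := hgoal
    _ = 1 / (128 * s) := by field_simp; ring
end

section
/- Let r be a positive integer and δ > 0. Let out be a random variable with values in {0,1}, let B₀,…,B_r be real-valued random variables, and let g : ℝ × ℝ × ℝ × {0,1} → {0,1} be any measurable function. Suppose X₀,…,X_r and G₀,…,G_r are random variables satisfying: X₀ = 𝔼[out] (a constant), G₀ = 1, and for every i ∈ {1,…,r}, X_i = rnd_δ( 𝔼[ out | B_i, B_{i−1}, X_{i−1}, Σ_{ℓ=1}^{i−1}(X_ℓ − X_{ℓ−1})², G_{i−1} ] ) almost surely and G_i = g(B_i, B_{i−1}, X_i, G_{i−1}). Then X₀,…,X_r is an SoS-augmented 2δ-weak martingale: for every i ∈ {1,…,r}, |𝔼[X_i | X_{i−1}, Σ_{ℓ=1}^{i−1}(X_ℓ − X_{ℓ−1})²]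 − X_{i−1}| ≤ 2δ almost surely. -/
open MeasureTheory ENNReal

section Aux

variable {Ω : Type*}

/-- Rounding down to a multiple of `δ` stays within `δ` below the value. -/
private lemma rnd_bounds {δ : ℝ} (hδ : 0 < δ) (y : ℝ) :
    δ * (⌊y / δ⌋ : ℝ) ≤ y ∧ y ≤ δ * (⌊y / δ⌋ : ℝ) + δ := by
  have h1 : (⌊y / δ⌋ : ℝ) ≤ y / δ := Int.floor_le _
  have h2 : y / δ < (⌊y / δ⌋ : ℝ) + 1 := Int.lt_floor_add_one _
  have ht : δ * (y / δ) = y := by field_simp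
  constructor
  · nlinarith
  · nlinarith

private lemma rnd_measurable {δ : ℝ} : Measurable fun x : ℝ => δ * (⌊x / δ⌋ : ℝ) := by
  have h1 : Measurable fun x : ℝ => (⌊x / δ⌋ : ℤ) :=
    Int.measurable_floor.comp (measurable_id.div_const δ)
  have h2 : Measurable fun x : ℝ => ((⌊x / δ⌋ : ℤ) : ℝ) :=
    (measurable_from_top (f := (Int.cast : ℤ → ℝ))).comp h1
  exact measurable_const.mul h2

/-- a.e. comparison from comparison of set integrals over a sub-σ-algebra. -/
private lemma ae_le_of_forall_setIntegral_le' {m m0 : MeasurableSpace Ω} {μ : Measure Ω}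
    (hm : m ≤ m0) [IsFiniteMeasure μ]
    {f g : Ω → ℝ} (hfm : StronglyMeasurable[m] f) (hgm : StronglyMeasurable[m] g)
    (hfi : Integrable f μ) (hgi : Integrable g μ)
    (H : ∀ s, MeasurableSet[m] s → (∫ ω in s, f ω ∂μ) ≤ ∫ ω in s, g ω ∂μ) :
    f ≤ᵐ[μ] g := by
  refine ae_le_of_ae_le_trim (hm := hm) ?_
  refine ae_le_of_forall_setIntegral_le (hfi.trim hm hfm) (hgi.trim hm hgm) ?_
  intro s hs _
  rw [← setIntegral_trim hm hfm hs, ← setIntegral_trim hm hgm hs]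
  exact H s hs

private lemma rnd_condexp_integrable {m0 : MeasurableSpace Ω} {μ : Measure Ω}
    [IsFiniteMeasure μ] {δ : ℝ} (hδ : 0 < δ) {Y : Ω → ℝ}
    (hY : AEMeasurable Y μ) (hYi : Integrable Y μ) :
    Integrable (fun ω => δ * (⌊Y ω / δ⌋ : ℝ)) μ := by
  refine (hYi.abs.add (integrable_const δ)).mono'
    (rnd_measurable.comp_aemeasurable hY).aestronglyMeasurable ?_
  filter_upwards with ω
  have h := rnd_bounds hδ (Y ω)
  simp only [Pi.add_apply]
  rw [Real.norm_eq_abs, abs_le]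
  constructor
  · have : -(|Y ω| + δ) ≤ Y ω - δ := by
      have := neg_abs_le (Y ω); linarith
    linarith [h.2]
  · have : Y ω ≤ |Y ω| + δ := by
      have := le_abs_self (Y ω); linarith
    linarith [h.1]

/-- Core estimate: if `V` a.e. equals the `δ`-rounding of `μ[out|n]`, then on every
`n`-measurable set the integrals of `V` and `out` differ by at most `δ · μ s`. -/
private lemma core_estimate {n : MeasurableSpace Ω} [m0 : MeasurableSpace Ω]
    {μ : Measure Ω} [IsProbabilityMeasure μ] (hn : n ≤ m0) {δ : ℝ} (hδ : 0 < δ)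
    {out V : Ω → ℝ} (hout_int : Integrable out μ)
    (hV : ∀ᵐ ω ∂μ, V ω = δ * (⌊(μ[out|n]) ω / δ⌋ : ℝ))
    {s : Set Ω} (hs : MeasurableSet[n] s) :
    (∫ ω in s, V ω ∂μ) ≤ (∫ ω in s, out ω ∂μ) ∧
      (∫ ω in s, out ω ∂μ) ≤ (∫ ω in s, V ω ∂μ) + δ * (μ s).toReal := by
  set Y : Ω → ℝ := μ[out|n] with hYdef
  have hY_int : Integrable Y μ := integrable_condExp
  have hY_meas : AEMeasurable Y μ :=
    (stronglyMeasurable_condExp.mono hn).measurable.aemeasurable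
  have hW_int : Integrable (fun ω => δ * (⌊Y ω / δ⌋ : ℝ)) μ :=
    rnd_condexp_integrable hδ hY_meas hY_int
  have hVW : ∫ ω in s, V ω ∂μ = ∫ ω in s, δ * (⌊Y ω / δ⌋ : ℝ) ∂μ :=
    integral_congr_ae (ae_restrict_of_ae hV)
  have hYout : ∫ ω in s, Y ω ∂μ = ∫ ω in s, out ω ∂μ :=
    setIntegral_condExp hn hout_int hs
  have hWle : ∫ ω in s, δ * (⌊Y ω / δ⌋ : ℝ) ∂μ ≤ ∫ ω in s, Y ω ∂μ := by
    refine integral_mono_ae hW_int.integrableOn hY_int.integrableOn ?_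
    exact ae_restrict_of_ae (Filter.Eventually.of_forall fun ω => (rnd_bounds hδ (Y ω)).1)
  have hleW : ∫ ω in s, Y ω ∂μ ≤ (∫ ω in s, δ * (⌊Y ω / δ⌋ : ℝ) ∂μ) + δ * (μ s).toReal := by
    have h1 : ∫ ω in s, Y ω ∂μ ≤ ∫ ω in s, (δ * (⌊Y ω / δ⌋ : ℝ) + δ) ∂μ := by
      refine integral_mono_ae hY_int.integrableOn
        (hW_int.integrableOn.add (integrable_const δ).integrableOn) ?_
      exact ae_restrict_of_ae (Filter.Eventually.of_forall fun ω => (rnd_bounds hδ (Y ω)).2)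
    have h2 : ∫ ω in s, (δ * (⌊Y ω / δ⌋ : ℝ) + δ) ∂μ
        = (∫ ω in s, δ * (⌊Y ω / δ⌋ : ℝ) ∂μ) + δ * (μ s).toReal := by
      rw [integral_add hW_int.integrableOn (integrable_const δ).integrableOn,
        setIntegral_const, smul_eq_mul, mul_comm]
      rfl
    linarith
  constructor
  · rw [hVW, ← hYout]; exact hWle
  · rw [hVW, ← hYout]; exact hleW

/-- Final assembly: from the two set-integral estimates, conclude the a.e. bound. -/
private lemma final_step {mi n : MeasurableSpace Ω} [m0 : MeasurableSpace Ω]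
    {μ : Measure Ω} [IsProbabilityMeasure μ]
    (hmi : mi ≤ m0) (hn : n ≤ m0) (hmin : mi ≤ n)
    {δ : ℝ} (hδ : 0 < δ) {out Xi Xp : Ω → ℝ}
    (hout_int : Integrable out μ)
    (hXi : ∀ᵐ ω ∂μ, Xi ω = δ * (⌊(μ[out | n]) ω / δ⌋ : ℝ))
    (hXi_int : Integrable Xi μ)
    (hXp_meas : Measurable[mi] Xp) (hXp_int : Integrable Xp μ)
    (claim : ∀ s, MeasurableSet[mi] s →
      (∫ ω in s, Xp ω ∂μ) ≤ (∫ ω in s, out ω ∂μ) ∧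
        (∫ ω in s, out ω ∂μ) ≤ (∫ ω in s, Xp ω ∂μ) + δ * (μ s).toReal) :
    ∀ᵐ ω ∂μ, |(μ[Xi | mi]) ω - Xp ω| ≤ 2 * δ := by
  have hconstup : ∀ s : Set Ω,
      ∫ ω in s, (Xp ω + δ) ∂μ = (∫ ω in s, Xp ω ∂μ) + δ * (μ s).toReal := by
    intro s
    rw [integral_add hXp_int.integrableOn (integrable_const δ).integrableOn,
      setIntegral_const, smul_eq_mul, mul_comm]
    rfl
  have hconstdown : ∀ s : Set Ω,
      ∫ ω in s, (Xp ω - δ) ∂μ = (∫ ω in s, Xp ω ∂μ) - δ * (μ s).toReal := by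
    intro s
    rw [integral_sub hXp_int.integrableOn (integrable_const δ).integrableOn,
      setIntegral_const, smul_eq_mul, mul_comm]
    rfl
  have hup : μ[Xi | mi] ≤ᵐ[μ] fun ω => Xp ω + δ := by
    refine ae_le_of_forall_setIntegral_le' hmi stronglyMeasurable_condExp
      ((hXp_meas.add_const δ).stronglyMeasurable) integrable_condExp
      (hXp_int.add (integrable_const δ)) ?_
    intro s hs
    rw [setIntegral_condExp hmi hXi_int hs]
    have h1 := core_estimate hn hδ hout_int hXi (hmin s hs)
    have h2 := claim s hs
    have h3 := hconstup s
    linarith [h1.1, h2.2]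
  have hdown : (fun ω => Xp ω - δ) ≤ᵐ[μ] μ[Xi | mi] := by
    refine ae_le_of_forall_setIntegral_le' hmi ((hXp_meas.sub_const δ).stronglyMeasurable)
      stronglyMeasurable_condExp (hXp_int.sub (integrable_const δ)) integrable_condExp ?_
    intro s hs
    rw [setIntegral_condExp hmi hXi_int hs]
    have h1 := core_estimate hn hδ hout_int hXi (hmin s hs)
    have h2 := claim s hs
    have h3 := hconstdown s
    linarith [h1.2, h2.1]
  filter_upwards [hup, hdown] with ω h1 h2
  rw [abs_le]
  constructor
  · linarith
  · linarith

end Aux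

/-- **The rounded game-value sequence is an SoS-augmented `2δ`-weak martingale.**
If `X₀ = 𝔼[out]`, `G₀ = 1`, and for each `i ∈ {1,…,r}` one has (a.s.)
`X_i = rnd_δ(𝔼[out | B_i, B_{i−1}, X_{i−1}, Σ_{ℓ<i}(X_ℓ − X_{ℓ−1})², G_{i−1}])` and
`G_i = g(B_i, B_{i−1}, X_i, G_{i−1})` for a measurable `g`, then for each
`i ∈ {1,…,r}`, `|𝔼[X_i | X_{i−1}, Σ_{ℓ<i}(X_ℓ − X_{ℓ−1})²] − X_{i−1}| ≤ 2δ` a.s. -/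
theorem game_value_sequence_is_sos_augmented_weak_martingale
    {Ω : Type*} [MeasurableSpace Ω] (μ : Measure Ω) [IsProbabilityMeasure μ]
    (r : ℕ) (hr : 0 < r) (δ : ℝ) (hδ : 0 < δ)
    (out : Ω → ℝ) (hout : Measurable out)
    (hout01 : ∀ ω, out ω = 0 ∨ out ω = 1)
    (B : ℕ → Ω → ℝ) (hB : ∀ i, Measurable (B i))
    (g : ℝ × ℝ × ℝ × Bool → Bool) (hg : Measurable g)
    (X : ℕ → Ω → ℝ) (hX : ∀ i, Measurable (X i))
    (G : ℕ → Ω → Bool) (hG : ∀ i, Measurable (G i))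
    (hX0 : X 0 = fun _ => ∫ ω, out ω ∂μ)
    (hG0 : G 0 = fun _ => true)
    (hXdef : ∀ i, 1 ≤ i → i ≤ r → ∀ᵐ ω ∂μ,
      X i ω = δ * (⌊(μ[out | MeasurableSpace.comap
          (fun ω => (B i ω, B (i - 1) ω, X (i - 1) ω,
            ∑ ℓ ∈ Finset.Icc 1 (i - 1), (X ℓ ω - X (ℓ - 1) ω) ^ 2,
            G (i - 1) ω))
          inferInstance]) ω / δ⌋ : ℝ))
    (hGdef : ∀ i, 1 ≤ i → i ≤ r → ∀ ω,
      G i ω = g (B i ω, B (i - 1) ω, X i ω, G (i - 1) ω)) :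
    ∀ i, 1 ≤ i → i ≤ r → ∀ᵐ ω ∂μ,
      |(μ[X i | MeasurableSpace.comap
          (fun ω => (X (i - 1) ω,
            ∑ ℓ ∈ Finset.Icc 1 (i - 1), (X ℓ ω - X (ℓ - 1) ω) ^ 2))
          inferInstance]) ω - X (i - 1) ω| ≤ 2 * δ := by
  intro i hi1 hir
  have hsymm : ∀ {f h : Ω → ℝ}, (∀ᵐ ω ∂μ, f ω = h ω) → (h =ᵐ[μ] f) :=
    fun hfh => hfh.mono fun ω hh => hh.symm
  have hout_int : Integrable out μ := by
    refine (integrable_const (1 : ℝ)).mono' hout.aestronglyMeasurable ?_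
    filter_upwards with ω
    rcases hout01 ω with h | h <;> simp [h]
  have hSmeas : ∀ k, Measurable fun ω => ∑ ℓ ∈ Finset.Icc 1 k, (X ℓ ω - X (ℓ - 1) ω) ^ 2 :=
    fun k => Finset.measurable_sum _ fun ℓ _ => ((hX ℓ).sub (hX (ℓ - 1))).pow_const 2
  have hsmall_meas : Measurable fun ω =>
      (X (i - 1) ω, ∑ ℓ ∈ Finset.Icc 1 (i - 1), (X ℓ ω - X (ℓ - 1) ω) ^ 2) :=
    (hX _).prodMk (hSmeas _)
  have hbig_meas : ∀ j, Measurable fun ω =>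
      (B j ω, B (j - 1) ω, X (j - 1) ω,
        ∑ ℓ ∈ Finset.Icc 1 (j - 1), (X ℓ ω - X (ℓ - 1) ω) ^ 2, G (j - 1) ω) :=
    fun j => (hB j).prodMk ((hB _).prodMk ((hX _).prodMk ((hSmeas _).prodMk (hG _))))
  have hmi_le : MeasurableSpace.comap (fun ω => (X (i - 1) ω,
      ∑ ℓ ∈ Finset.Icc 1 (i - 1), (X ℓ ω - X (ℓ - 1) ω) ^ 2)) inferInstance ≤ ‹MeasurableSpace Ω› :=
    hsmall_meas.comap_le
  have hni_le : ∀ j, MeasurableSpace.comap (fun ω => (B j ω, B (j - 1) ω, X (j - 1) ω,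
      ∑ ℓ ∈ Finset.Icc 1 (j - 1), (X ℓ ω - X (ℓ - 1) ω) ^ 2, G (j - 1) ω)) inferInstance
      ≤ ‹MeasurableSpace Ω› :=
    fun j => (hbig_meas j).comap_le
  have hproj : Measurable fun p : ℝ × ℝ × ℝ × ℝ × Bool => ((p.2.2.1, p.2.2.2.1) : ℝ × ℝ) :=
    (measurable_fst.comp (measurable_snd.comp measurable_snd)).prodMk
      (measurable_fst.comp (measurable_snd.comp (measurable_snd.comp measurable_snd)))
  have hmin : MeasurableSpace.comap (fun ω => (X (i - 1) ω,
      ∑ ℓ ∈ Finset.Icc 1 (i - 1), (X ℓ ω - X (ℓ - 1) ω) ^ 2)) inferInstance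
      ≤ MeasurableSpace.comap (fun ω => (B i ω, B (i - 1) ω, X (i - 1) ω,
        ∑ ℓ ∈ Finset.Icc 1 (i - 1), (X ℓ ω - X (ℓ - 1) ω) ^ 2, G (i - 1) ω)) inferInstance := by
    have heq : (fun ω => (X (i - 1) ω,
        ∑ ℓ ∈ Finset.Icc 1 (i - 1), (X ℓ ω - X (ℓ - 1) ω) ^ 2))
        = (fun p : ℝ × ℝ × ℝ × ℝ × Bool => ((p.2.2.1, p.2.2.2.1) : ℝ × ℝ)) ∘
          (fun ω => (B i ω, B (i - 1) ω, X (i - 1) ω,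
            ∑ ℓ ∈ Finset.Icc 1 (i - 1), (X ℓ ω - X (ℓ - 1) ω) ^ 2, G (i - 1) ω)) := rfl
    rw [heq, ← MeasurableSpace.comap_comp]
    exact MeasurableSpace.comap_mono hproj.comap_le
  have hXi_int : Integrable (X i) μ :=
    (rnd_condexp_integrable hδ
      ((stronglyMeasurable_condExp.mono (hni_le i)).measurable.aemeasurable)
      integrable_condExp).congr (hsymm (hXdef i hi1 hir))
  have hXim1_int : Integrable (X (i - 1)) μ := by
    rcases (by omega : i = 1 ∨ 2 ≤ i) with h1 | h2
    · subst h1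
      rw [show (1 : ℕ) - 1 = 0 from rfl, hX0]
      exact integrable_const _
    · exact (rnd_condexp_integrable hδ
        ((stronglyMeasurable_condExp.mono (hni_le (i - 1))).measurable.aemeasurable)
        integrable_condExp).congr (hsymm (hXdef (i - 1) (by omega) (by omega)))
  have hXim1_meas : Measurable[MeasurableSpace.comap (fun ω => (X (i - 1) ω,
      ∑ ℓ ∈ Finset.Icc 1 (i - 1), (X ℓ ω - X (ℓ - 1) ω) ^ 2)) inferInstance] (X (i - 1)) :=
    (comap_measurable _).fst
  have claim : ∀ s, MeasurableSet[MeasurableSpace.comap (fun ω => (X (i - 1) ω,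
      ∑ ℓ ∈ Finset.Icc 1 (i - 1), (X ℓ ω - X (ℓ - 1) ω) ^ 2)) inferInstance] s →
      (∫ ω in s, X (i - 1) ω ∂μ) ≤ (∫ ω in s, out ω ∂μ) ∧
        (∫ ω in s, out ω ∂μ) ≤ (∫ ω in s, X (i - 1) ω ∂μ) + δ * (μ s).toReal := by
    rcases (by omega : i = 1 ∨ 2 ≤ i) with h1 | h2
    · subst h1
      intro s hs
      have hIcc : Finset.Icc 1 (1 - 1 : ℕ) = ∅ := Finset.Icc_eq_empty (by omega)
      have hconst : (fun ω : Ω => (X (1 - 1) ω,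
          ∑ ℓ ∈ Finset.Icc 1 (1 - 1 : ℕ), (X ℓ ω - X (ℓ - 1) ω) ^ 2))
          = fun _ : Ω => ((∫ ω, out ω ∂μ : ℝ), (0 : ℝ)) := by
        funext ω
        rw [show (1 : ℕ) - 1 = 0 from rfl] at hIcc ⊢
        rw [hX0, hIcc]
        simp
      rw [hconst, MeasurableSpace.comap_const] at hs
      rcases MeasurableSpace.measurableSet_bot_iff.mp hs with rfl | rfl
      · constructor <;> simp [mul_nonneg hδ.le ENNReal.toReal_nonneg]
      · have hXeq : ∫ ω in Set.univ, X (1 - 1 : ℕ) ω ∂μ = ∫ ω in Set.univ, out ω ∂μ := by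
          rw [setIntegral_univ, setIntegral_univ, show (1 : ℕ) - 1 = 0 from rfl, hX0,
            integral_const]
          simp
        constructor
        · rw [hXeq]
        · rw [hXeq]
          have : 0 ≤ δ * (μ Set.univ).toReal := mul_nonneg hδ.le ENNReal.toReal_nonneg
          linarith
    · intro s hs
      obtain ⟨A, hA, rfl⟩ := MeasurableSpace.measurableSet_comap.mp hs
      have hsum : ∀ f : ℕ → ℝ, ∑ ℓ ∈ Finset.Icc 1 (i - 1), f ℓ
          = (∑ ℓ ∈ Finset.Icc 1 (i - 1 - 1), f ℓ) + f (i - 1) := by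
        intro f
        have heq : i - 1 = (i - 1 - 1) + 1 := by omega
        conv_lhs => rw [heq]
        rw [Finset.sum_Icc_succ_top (by omega)]
        rw [← heq]
      -- the n_{i-1}-measurable version of the small map
      have hb : Measurable[MeasurableSpace.comap (fun ω => (B (i - 1) ω, B (i - 1 - 1) ω,
          X (i - 1 - 1) ω, ∑ ℓ ∈ Finset.Icc 1 (i - 1 - 1), (X ℓ ω - X (ℓ - 1) ω) ^ 2,
          G (i - 1 - 1) ω)) inferInstance]
          fun ω => (B (i - 1) ω, B (i - 1 - 1) ω, X (i - 1 - 1) ω,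
            ∑ ℓ ∈ Finset.Icc 1 (i - 1 - 1), (X ℓ ω - X (ℓ - 1) ω) ^ 2, G (i - 1 - 1) ω) :=
        comap_measurable _
      have hX' : Measurable[MeasurableSpace.comap (fun ω => (B (i - 1) ω, B (i - 1 - 1) ω,
          X (i - 1 - 1) ω, ∑ ℓ ∈ Finset.Icc 1 (i - 1 - 1), (X ℓ ω - X (ℓ - 1) ω) ^ 2,
          G (i - 1 - 1) ω)) inferInstance]
          fun ω => δ * (⌊(μ[out | MeasurableSpace.comap (fun ω => (B (i - 1) ω, B (i - 1 - 1) ω,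
            X (i - 1 - 1) ω, ∑ ℓ ∈ Finset.Icc 1 (i - 1 - 1), (X ℓ ω - X (ℓ - 1) ω) ^ 2,
            G (i - 1 - 1) ω)) inferInstance]) ω / δ⌋ : ℝ) :=
        rnd_measurable.comp stronglyMeasurable_condExp.measurable
      have hsmall' : Measurable[MeasurableSpace.comap (fun ω => (B (i - 1) ω, B (i - 1 - 1) ω,
          X (i - 1 - 1) ω, ∑ ℓ ∈ Finset.Icc 1 (i - 1 - 1), (X ℓ ω - X (ℓ - 1) ω) ^ 2,
          G (i - 1 - 1) ω)) inferInstance]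
          fun ω => ((δ * (⌊(μ[out | MeasurableSpace.comap (fun ω => (B (i - 1) ω,
            B (i - 1 - 1) ω, X (i - 1 - 1) ω,
            ∑ ℓ ∈ Finset.Icc 1 (i - 1 - 1), (X ℓ ω - X (ℓ - 1) ω) ^ 2,
            G (i - 1 - 1) ω)) inferInstance]) ω / δ⌋ : ℝ),
            (∑ ℓ ∈ Finset.Icc 1 (i - 1 - 1), (X ℓ ω - X (ℓ - 1) ω) ^ 2) +
              ((δ * (⌊(μ[out | MeasurableSpace.comap (fun ω => (B (i - 1) ω, B (i - 1 - 1) ω,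
                X (i - 1 - 1) ω, ∑ ℓ ∈ Finset.Icc 1 (i - 1 - 1), (X ℓ ω - X (ℓ - 1) ω) ^ 2,
                G (i - 1 - 1) ω)) inferInstance]) ω / δ⌋ : ℝ)) - X (i - 1 - 1) ω) ^ 2) :
            ℝ × ℝ) :=
        hX'.prodMk ((hb.snd.snd.snd.fst).add ((hX'.sub hb.snd.snd.fst).pow_const 2))
      have haeq : ∀ᵐ ω ∂μ, (X (i - 1) ω,
          ∑ ℓ ∈ Finset.Icc 1 (i - 1), (X ℓ ω - X (ℓ - 1) ω) ^ 2)
          = ((δ * (⌊(μ[out | MeasurableSpace.comap (fun ω => (B (i - 1) ω, B (i - 1 - 1) ω,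
            X (i - 1 - 1) ω, ∑ ℓ ∈ Finset.Icc 1 (i - 1 - 1), (X ℓ ω - X (ℓ - 1) ω) ^ 2,
            G (i - 1 - 1) ω)) inferInstance]) ω / δ⌋ : ℝ),
            (∑ ℓ ∈ Finset.Icc 1 (i - 1 - 1), (X ℓ ω - X (ℓ - 1) ω) ^ 2) +
              ((δ * (⌊(μ[out | MeasurableSpace.comap (fun ω => (B (i - 1) ω, B (i - 1 - 1) ω,
                X (i - 1 - 1) ω, ∑ ℓ ∈ Finset.Icc 1 (i - 1 - 1), (X ℓ ω - X (ℓ - 1) ω) ^ 2,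
                G (i - 1 - 1) ω)) inferInstance]) ω / δ⌋ : ℝ)) - X (i - 1 - 1) ω) ^ 2) :
            ℝ × ℝ) := by
        filter_upwards [hXdef (i - 1) (by omega) (by omega)] with ω hω
        rw [hsum fun ℓ => (X ℓ ω - X (ℓ - 1) ω) ^ 2, hω]
      have hss' : ((fun ω => (X (i - 1) ω,
          ∑ ℓ ∈ Finset.Icc 1 (i - 1), (X ℓ ω - X (ℓ - 1) ω) ^ 2)) ⁻¹' A : Set Ω)
          =ᵐ[μ] ((fun ω => ((δ * (⌊(μ[out | MeasurableSpace.comap (fun ω => (B (i - 1) ω,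
            B (i - 1 - 1) ω, X (i - 1 - 1) ω,
            ∑ ℓ ∈ Finset.Icc 1 (i - 1 - 1), (X ℓ ω - X (ℓ - 1) ω) ^ 2,
            G (i - 1 - 1) ω)) inferInstance]) ω / δ⌋ : ℝ),
            (∑ ℓ ∈ Finset.Icc 1 (i - 1 - 1), (X ℓ ω - X (ℓ - 1) ω) ^ 2) +
              ((δ * (⌊(μ[out | MeasurableSpace.comap (fun ω => (B (i - 1) ω, B (i - 1 - 1) ω,
                X (i - 1 - 1) ω, ∑ ℓ ∈ Finset.Icc 1 (i - 1 - 1), (X ℓ ω - X (ℓ - 1) ω) ^ 2,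
                G (i - 1 - 1) ω)) inferInstance]) ω / δ⌋ : ℝ)) - X (i - 1 - 1) ω) ^ 2) :
            ℝ × ℝ)) ⁻¹' A) := by
        rw [Filter.eventuallyEq_set]
        filter_upwards [haeq] with ω hω
        simp only [Set.mem_preimage, hω]
      have hs'meas := hsmall' hA
      have h1 := core_estimate (hni_le (i - 1)) hδ hout_int
        (hXdef (i - 1) (by omega) (by omega)) hs'meas
      have e1 := setIntegral_congr_set (μ := μ) (f := out) hss'
      have e2 := setIntegral_congr_set (μ := μ) (f := X (i - 1)) hss'
      have e3 := measure_congr hss'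
      rw [e3]
      exact ⟨by rw [e2, e1]; exact h1.1, by rw [e1, e2]; exact h1.2⟩
  exact final_step hmi_le (hni_le i) hmin hδ hout_int (hXdef i hi1 hir) hXi_int
    hXim1_meas hXim1_int claim
end
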